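/- arXiv:2309.05004 — 4 statements merged into one kernel-verified Lean document; each statement's English description precedes it below -/
import Mathlib

section
/- Let K be measurable with 0 ≤ K ≤ C_K and let μ₁, μ₂ ∈ L¹(ℝ) with ‖μ₁‖_{L¹}, ‖μ₂‖_{L¹} ≤ C_μ. Define ḡ₀(t,x,v) = exp(−∫₀^{T−t} σ(x + vτ, v) dτ) · (μ₂ − μ₁)(x + v(T−t)); for n ≥ 1 let ḡ_n be a mild solution of −∂_t ḡ_n − v ∂_x ḡ_n = −σ ḡ_n + L̃(ḡ_{n−1}) with final datum 0; and let ḡ_{>N} be a mild solution of −∂_t ḡ_{>N} − v ∂_x ḡ_{>N} = −σ ḡ_{>N} + L̃(ḡ_N + ḡ_{>N}) with final datum 0. Let f be a bounded measurable mild solution of the homogeneous kinetic equation with initial datum φ, 0 ≤ φ ≤ C_φ. Then for every measurable set I ⊆ ℝ and all v, v' ∈ V: |∫₀^T ∫_I f(t,x,v') ḡ_{>N}(t,x,v) dx dt| ≤ 2 T² C_K C_φ e^{4 C_K T} (e^{2 C_K T} − 1)^N C_μ; in particular this bound becomes arbitrarily small for large N when e^{2 C_K T} − 1 < 1. -/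
open MeasureTheory Real Set Filter
open scoped ENNReal NNReal

set_option maxHeartbeats 1000000

noncomputable section

/-- Bounded measurable mild solution of the forward kinetic equation
`∂ₜ f + v ∂ₓ f = 𝒦(f) + h`, `f(0,·,·)=φ`, on `[0,T] × ℝ × {−1,1}` (velocity set `V = {−1,1}`
with counting measure). -/
def IsMildF (T : ℝ) (K : ℝ → ℝ → ℝ → ℝ) (φ : ℝ → ℝ → ℝ)
    (h f : ℝ → ℝ → ℝ → ℝ) : Prop :=
  (Measurable fun p : ℝ × ℝ × ℝ => f p.1 p.2.1 p.2.2) ∧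
  (∃ C : ℝ, ∀ t x v, |f t x v| ≤ C) ∧
  ∀ t ∈ Set.Icc (0 : ℝ) T, ∀ x : ℝ, ∀ v ∈ ({1, -1} : Set ℝ),
    f t x v = φ (x - v * t) v +
      ∫ s in (0 : ℝ)..t,
        (K (x - v * (t - s)) v 1 * f s (x - v * (t - s)) 1
          + K (x - v * (t - s)) v (-1) * f s (x - v * (t - s)) (-1)
          - (K (x - v * (t - s)) 1 v + K (x - v * (t - s)) (-1) v)
              * f s (x - v * (t - s)) v
          + h s (x - v * (t - s)) v)

/-- Mild solution (measurable, with finite `L¹ₓ` norms uniformly in `t,v`) of the backward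
equation `−∂ₜ g − v ∂ₓ g = α L̃(g) − σ g + h`, `g(T,·,·)=ψ`, where
`σ(x,v) = Σ_{v'∈V} K(x,v',v)` and `L̃(g)(t,x,v) = Σ_{v'∈V} K(x,v',v) g(t,x,v')`. -/
def IsMildG (T : ℝ) (K : ℝ → ℝ → ℝ → ℝ) (α : ℝ) (ψ : ℝ → ℝ → ℝ)
    (h g : ℝ → ℝ → ℝ → ℝ) : Prop :=
  (Measurable fun p : ℝ × ℝ × ℝ => g p.1 p.2.1 p.2.2) ∧
  (∀ t ∈ Set.Icc (0 : ℝ) T, ∀ v ∈ ({1, -1} : Set ℝ),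
    Integrable (fun x => g t x v)) ∧
  (∃ C : ℝ, ∀ t ∈ Set.Icc (0 : ℝ) T, ∀ v ∈ ({1, -1} : Set ℝ),
    (∫ x : ℝ, |g t x v|) ≤ C) ∧
  ∀ t ∈ Set.Icc (0 : ℝ) T, ∀ x : ℝ, ∀ v ∈ ({1, -1} : Set ℝ),
    g t x v = ψ (x + v * (T - t)) v +
      ∫ s in t..T,
        (α * (K (x + v * (s - t)) 1 v * g s (x + v * (s - t)) 1
              + K (x + v * (s - t)) (-1) v * g s (x + v * (s - t)) (-1))
          - (K (x + v * (s - t)) 1 v + K (x + v * (s - t)) (-1) v)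
              * g s (x + v * (s - t)) v
          + h s (x + v * (s - t)) v)

/-- Bounded measurable mild solution of the backward/adjoint equation
`−∂ₜ g − v ∂ₓ g = α L̃(g) − σ g + h`, `g(T,·,·)=ψ`. -/
def IsMildGb (T : ℝ) (K : ℝ → ℝ → ℝ → ℝ) (α : ℝ) (ψ : ℝ → ℝ → ℝ)
    (h g : ℝ → ℝ → ℝ → ℝ) : Prop :=
  (Measurable fun p : ℝ × ℝ × ℝ => g p.1 p.2.1 p.2.2) ∧
  (∃ C : ℝ, ∀ t x v, |g t x v| ≤ C) ∧
  ∀ t ∈ Set.Icc (0 : ℝ) T, ∀ x : ℝ, ∀ v ∈ ({1, -1} : Set ℝ),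
    g t x v = ψ (x + v * (T - t)) v +
      ∫ s in t..T,
        (α * (K (x + v * (s - t)) 1 v * g s (x + v * (s - t)) 1
              + K (x + v * (s - t)) (-1) v * g s (x + v * (s - t)) (-1))
          - (K (x + v * (s - t)) 1 v + K (x + v * (s - t)) (-1) v)
              * g s (x + v * (s - t)) v
          + h s (x + v * (s - t)) v)

lemma myint_exp {c : ℝ} (hc : c ≠ 0) (a b : ℝ) :
    ∫ s in a..b, Real.exp (c * s) = (Real.exp (c * b) - Real.exp (c * a)) / c := by
  have h : ∀ s : ℝ, HasDerivAt (fun u : ℝ => Real.exp (c * u) / c) (Real.exp (c * s)) s := by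
    intro s
    have h1 : HasDerivAt (fun u : ℝ => c * u) c s := by
      simpa using (hasDerivAt_id s).const_mul c
    have h2 := (h1.exp).div_const c
    simpa [mul_div_assoc, div_self hc] using h2
  have := intervalIntegral.integral_eq_sub_of_hasDerivAt (f := fun u => Real.exp (c * u) / c)
    (fun s _ => h s)
    ((Real.continuous_exp.comp (continuous_const.mul continuous_id)).intervalIntegrable a b)
  rw [this]
  ring

lemma myint_expE {c : ℝ} (hc : c ≠ 0) (T t : ℝ) :
    ∫ s in t..T, Real.exp (c * (T - s)) = (Real.exp (c * (T - t)) - 1) / c := by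
  have := intervalIntegral.integral_comp_sub_left (a := t) (b := T)
    (fun u => Real.exp (c * u)) T
  rw [this]
  simp [myint_exp hc]

lemma myint_pow (t T : ℝ) (n : ℕ) :
    ∫ s in t..T, (T - s) ^ n = (T - t) ^ (n + 1) / (n + 1) := by
  have := intervalIntegral.integral_comp_sub_left (a := t) (b := T) (fun u => u ^ n) T
  rw [this]
  simp [integral_pow]

lemma key_exp_ineq {u : ℝ} (hu : 0 ≤ u) : 2 ≤ Real.exp u * (2 - 2 * u + u ^ 2) := by
  have h3 := Real.sum_le_exp_of_nonneg hu 3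
  have hsum : ∑ i ∈ Finset.range 3, u ^ i / (Nat.factorial i) = 1 + u + u ^ 2 / 2 := by
    simp [Finset.sum_range_succ, Nat.factorial]
  rw [hsum] at h3
  nlinarith [sq_nonneg (1 - u), sq_nonneg u, sq_nonneg (u * u)]

lemma intint_of_bdd {h : ℝ → ℝ} {M a b : ℝ} (hab : a ≤ b) (hm : Measurable h)
    (hb : ∀ s ∈ Icc a b, |h s| ≤ M) : IntervalIntegrable h volume a b := by
  rw [intervalIntegrable_iff, uIoc_of_le hab]
  refine Integrable.mono' (g := fun _ => M)
    (integrableOn_const (C := M) measure_Ioc_lt_top.ne)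
    hm.aestronglyMeasurable ?_
  rw [ae_restrict_iff' measurableSet_Ioc]
  exact ae_of_all _ fun s hs => by rw [Real.norm_eq_abs]; exact hb s ⟨hs.1.le, hs.2⟩

lemma bmeas {g : ℝ → ℝ → ℝ → ℝ}
    (hg : Measurable fun q : ℝ × ℝ × ℝ => g q.1 q.2.1 q.2.2) (w : ℝ) :
    Measurable fun s => ∫ x : ℝ, |g s x w| := by
  have h1 : StronglyMeasurable fun q : ℝ × ℝ => |g q.1 q.2 w| :=
    ((hg.comp (show Measurable fun q : ℝ × ℝ => ((q.1, q.2, w) : ℝ × ℝ × ℝ) from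
      measurable_fst.prodMk (measurable_snd.prodMk measurable_const))).abs).stronglyMeasurable
  exact h1.integral_prod_right'.measurable

lemma gronwall_backward {T β M : ℝ} (hT : 0 ≤ T) (hβ : 0 ≤ β)
    (u w q : ℝ → ℝ)
    (hu_meas : Measurable u) (hu_bd : ∀ t ∈ Icc (0:ℝ) T, |u t| ≤ M)
    (hw : Continuous w) (hq : Continuous q)
    (hu : ∀ t ∈ Icc (0:ℝ) T, u t ≤ ∫ s in t..T, (β * u s + q s))
    (hwsup : ∀ t ∈ Icc (0:ℝ) T, (∫ s in t..T, (β * w s + q s)) ≤ w t) :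
    ∀ t ∈ Icc (0:ℝ) T, u t ≤ w t := by
  classical
  set u' : ℝ → ℝ := fun t => if t ∈ Icc (0:ℝ) T then u t else 0 with hu'def
  have hu'_eq : ∀ t ∈ Icc (0:ℝ) T, u' t = u t := by
    intro t ht; simp only [hu'def]; rw [if_pos ht]
  have hu'_meas : Measurable u' := Measurable.ite measurableSet_Icc hu_meas measurable_const
  have hM : 0 ≤ M := le_trans (abs_nonneg _) (hu_bd 0 ⟨le_refl _, hT⟩)
  have hu'_bd : ∀ t, |u' t| ≤ M := by
    intro t
    by_cases h : t ∈ Icc (0:ℝ) T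
    · rw [hu'_eq t h]; exact hu_bd t h
    · simp only [hu'def]; rw [if_neg h]; simpa using hM
  have hu'_int : ∀ a b : ℝ, IntervalIntegrable u' volume a b := by
    intro a b
    rw [intervalIntegrable_iff]
    refine Integrable.mono' (g := fun _ => M)
      (integrableOn_const (C := M) measure_Ioc_lt_top.ne)
      hu'_meas.aestronglyMeasurable (ae_of_all _ ?_)
    intro x; simpa [Real.norm_eq_abs] using hu'_bd x
  have hu' : ∀ t ∈ Icc (0:ℝ) T, u' t ≤ ∫ s in t..T, (β * u' s + q s) := by
    intro t ht
    rw [hu'_eq t ht]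
    refine le_trans (hu t ht) (le_of_eq ?_)
    apply intervalIntegral.integral_congr
    intro s hs
    rw [uIcc_of_le ht.2] at hs
    show β * u s + q s = β * u' s + q s
    rw [hu'_eq s ⟨le_trans ht.1 hs.1, hs.2⟩]
  obtain ⟨Mw, hMw⟩ := (isCompact_Icc (a := (0:ℝ)) (b := T)).exists_bound_of_continuousOn
    hw.continuousOn
  have hMw0 : 0 ≤ Mw := le_trans (norm_nonneg _) (hMw 0 ⟨le_refl _, hT⟩)
  set D : ℝ := M + Mw with hD
  have hD0 : 0 ≤ D := add_nonneg hM hMw0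
  have key : ∀ n : ℕ, ∀ t ∈ Icc (0:ℝ) T,
      u' t ≤ w t + D * (β * (T - t)) ^ n / (Nat.factorial n) := by
    intro n
    induction n with
    | zero =>
      intro t ht
      have h1 : u' t ≤ M := le_trans (le_abs_self _) (hu'_bd t)
      have h2 : -Mw ≤ w t := by
        have := hMw t ht
        rw [Real.norm_eq_abs] at this
        linarith [(abs_le.1 this).1]
      simp only [pow_zero, Nat.factorial_zero]
      push_cast
      linarith
    | succ n ih =>
      intro t ht
      have htT : t ≤ T := ht.2
      have ht0 : 0 ≤ t := ht.1
      have hcont : Continuous fun s =>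
          β * w s + q s + D * β ^ (n+1) / (Nat.factorial n) * (T - s) ^ n := by
        fun_prop
      calc u' t ≤ ∫ s in t..T, (β * u' s + q s) := hu' t ht
        _ ≤ ∫ s in t..T,
            (β * w s + q s + D * β ^ (n+1) / (Nat.factorial n) * (T - s) ^ n) := by
          apply intervalIntegral.integral_mono_on htT
            (((hu'_int t T).const_mul β).add (hq.intervalIntegrable t T))
            (hcont.intervalIntegrable t T)
          intro s hs
          have hsIcc : s ∈ Icc (0:ℝ) T := ⟨le_trans ht0 hs.1, hs.2⟩
          have := ih s hsIcc
          have hβu : β * u' s ≤ β * (w s + D * (β * (T - s)) ^ n / (Nat.factorial n)) :=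
            mul_le_mul_of_nonneg_left this hβ
          have hexp : β * (D * (β * (T - s)) ^ n / (Nat.factorial n))
              = D * β ^ (n+1) / (Nat.factorial n) * (T - s) ^ n := by
            rw [mul_pow]; ring
          linarith [hβu, hexp]
        _ = (∫ s in t..T, (β * w s + q s))
            + D * β ^ (n+1) / (Nat.factorial n) * ((T - t) ^ (n+1) / (n+1)) := by
          have hc1 : Continuous fun s => β * w s + q s := (continuous_const.mul hw).add hq
          have hc2 : Continuous fun s : ℝ =>
              D * β ^ (n+1) / (Nat.factorial n) * (T - s) ^ n := by fun_prop
          rw [intervalIntegral.integral_add (hc1.intervalIntegrable t T)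
            (hc2.intervalIntegrable t T), intervalIntegral.integral_const_mul, myint_pow]
        _ ≤ w t + D * (β * (T - t)) ^ (n+1) / (Nat.factorial (n+1)) := by
          have h1 := hwsup t ht
          have h2 : D * β ^ (n+1) / (Nat.factorial n) * ((T - t) ^ (n+1) / (n+1))
              = D * (β * (T - t)) ^ (n+1) / (Nat.factorial (n+1)) := by
            rw [mul_pow, Nat.factorial_succ]
            push_cast
            field_simp
          rw [h2]
          linarith [hwsup t ht]
  intro t ht
  have hlim : Tendsto (fun n : ℕ => w t + D * (β * (T - t)) ^ n / (Nat.factorial n)) atTop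
      (nhds (w t)) := by
    have h0 : Tendsto (fun n : ℕ => (β * (T - t)) ^ n / (Nat.factorial n)) atTop (nhds 0) :=
      FloorSemiring.tendsto_pow_div_factorial_atTop (β * (T - t))
    have := ((h0.const_mul D).const_add (w t))
    simpa [mul_div_assoc] using this
  rw [← hu'_eq t ht]
  refine ge_of_tendsto hlim ?_
  filter_upwards with n using key n t ht

lemma l1_recursion {T CK Cp : ℝ} (hT : 0 < T) (hCK : 0 < CK)
    {K : ℝ → ℝ → ℝ → ℝ}
    (hK_meas : Measurable fun q : ℝ × ℝ × ℝ => K q.1 q.2.1 q.2.2)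
    (hK_nonneg : ∀ x v v', 0 ≤ K x v v') (hK_bdd : ∀ x v v', K x v v' ≤ CK)
    {p g : ℝ → ℝ → ℝ → ℝ}
    (hp_meas : Measurable fun q : ℝ × ℝ × ℝ => p q.1 q.2.1 q.2.2)
    (hp_int : ∀ s ∈ Icc (0:ℝ) T, ∀ v ∈ ({1,-1} : Set ℝ), Integrable (fun x => p s x v))
    (hp_bd : ∀ s ∈ Icc (0:ℝ) T, ∀ v ∈ ({1,-1} : Set ℝ), (∫ x, |p s x v|) ≤ Cp)
    (hg : IsMildG T K 0 (fun _ _ => 0)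
      (fun s y v => K y 1 v * p s y 1 + K y (-1) v * p s y (-1)) g) :
    ∀ t ∈ Icc (0:ℝ) T, ∀ v ∈ ({1,-1} : Set ℝ),
      (∫ x, |g t x v|) ≤ ∫ s in t..T,
        (2*CK * (∫ x, |g s x v|) + CK * (∫ x, |p s x 1|) + CK * (∫ x, |p s x (-1)|)) := by
  obtain ⟨hg_meas, hg_int, ⟨Cg, hCg⟩, hg_eq⟩ := hg
  intro t ht v hv
  have htT : t ≤ T := ht.2
  have h1V : (1:ℝ) ∈ ({1,-1} : Set ℝ) := by simp
  have h2V : (-1:ℝ) ∈ ({1,-1} : Set ℝ) := by simp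
  set bg : ℝ → ℝ → ℝ := fun s w => ∫ x, |g s x w| with hbg_def
  set bp : ℝ → ℝ → ℝ := fun s w => ∫ x, |p s x w| with hbp_def
  set F : ℝ → ℝ → ℝ := fun s x =>
    -((K (x + v * (s - t)) 1 v + K (x + v * (s - t)) (-1) v)
          * g s (x + v * (s - t)) v)
      + (K (x + v * (s - t)) 1 v * p s (x + v * (s - t)) 1
          + K (x + v * (s - t)) (-1) v * p s (x + v * (s - t)) (-1)) with hF_def
  have heq : ∀ x, g t x v = ∫ s in t..T, F s x := by
    intro x
    have := hg_eq t ht x v hv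
    simpa using this
  -- joint measurability of F (in (s,x))
  have hm_shift : Measurable fun q : ℝ × ℝ => q.2 + v * (q.1 - t) := by fun_prop
  have hmK : ∀ a b : ℝ, Measurable fun q : ℝ × ℝ => K (q.2 + v * (q.1 - t)) a b := fun a b =>
    hK_meas.comp (show Measurable fun q : ℝ × ℝ => ((q.2 + v * (q.1 - t), a, b) : ℝ × ℝ × ℝ)
      from hm_shift.prodMk measurable_const)
  have hmg : ∀ w : ℝ, Measurable fun q : ℝ × ℝ => g q.1 (q.2 + v * (q.1 - t)) w := fun w =>
    hg_meas.comp (show Measurable fun q : ℝ × ℝ => ((q.1, q.2 + v * (q.1 - t), w) : ℝ × ℝ × ℝ)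
      from measurable_fst.prodMk (hm_shift.prodMk measurable_const))
  have hmp : ∀ w : ℝ, Measurable fun q : ℝ × ℝ => p q.1 (q.2 + v * (q.1 - t)) w := fun w =>
    hp_meas.comp (show Measurable fun q : ℝ × ℝ => ((q.1, q.2 + v * (q.1 - t), w) : ℝ × ℝ × ℝ)
      from measurable_fst.prodMk (hm_shift.prodMk measurable_const))
  have hF_meas : Measurable fun q : ℝ × ℝ => F q.1 q.2 := by
    exact ((((hmK 1 v).add (hmK (-1) v)).mul (hmg v)).neg).add
      (((hmK 1 v).mul (hmp 1)).add ((hmK (-1) v).mul (hmp (-1))))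
  -- measurability of s ↦ bg s w, bp s w
  have hbg_meas : ∀ w : ℝ, Measurable fun s => bg s w := by
    intro w
    have h1 : StronglyMeasurable fun q : ℝ × ℝ => |g q.1 q.2 w| :=
      ((hg_meas.comp (show Measurable fun q : ℝ × ℝ => ((q.1, q.2, w) : ℝ × ℝ × ℝ) from
        measurable_fst.prodMk (measurable_snd.prodMk
        measurable_const))).abs).stronglyMeasurable
    exact h1.integral_prod_right'.measurable
  have hbp_meas : ∀ w : ℝ, Measurable fun s => bp s w := by
    intro w
    have h1 : StronglyMeasurable fun q : ℝ × ℝ => |p q.1 q.2 w| :=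
      ((hp_meas.comp (show Measurable fun q : ℝ × ℝ => ((q.1, q.2, w) : ℝ × ℝ × ℝ) from
        measurable_fst.prodMk (measurable_snd.prodMk
        measurable_const))).abs).stronglyMeasurable
    exact h1.integral_prod_right'.measurable
  have hbg_nonneg : ∀ s w, 0 ≤ bg s w := fun s w => integral_nonneg fun x => abs_nonneg _
  have hbp_nonneg : ∀ s w, 0 ≤ bp s w := fun s w => integral_nonneg fun x => abs_nonneg _
  -- step 1 : pointwise in x
  have step1 : ∀ x, (‖g t x v‖₊ : ℝ≥0∞) ≤ ∫⁻ s in Ioc t T, (‖F s x‖₊ : ℝ≥0∞) := by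
    intro x
    rw [heq x, intervalIntegral.integral_of_le htT]
    exact enorm_integral_le_lintegral_enorm _
  -- step 2 : integrate in x and swap
  have step2 : (∫⁻ x, (‖g t x v‖₊ : ℝ≥0∞)) ≤ ∫⁻ s in Ioc t T, ∫⁻ x, (‖F s x‖₊ : ℝ≥0∞) := by
    refine le_trans (lintegral_mono step1) (le_of_eq ?_)
    exact lintegral_lintegral_swap ((hF_meas.comp measurable_swap).enorm.aemeasurable)
  -- step 3 : bound inner integral for each s
  have step3 : ∀ s ∈ Ioc t T, (∫⁻ x, (‖F s x‖₊ : ℝ≥0∞))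
      ≤ ENNReal.ofReal (2*CK * bg s v + CK * bp s 1 + CK * bp s (-1)) := by
    intro s hs
    have hsIcc : s ∈ Icc (0:ℝ) T := ⟨le_trans ht.1 hs.1.le, hs.2⟩
    set c : ℝ := v * (s - t) with hc_def
    have hpt : ∀ x, (‖F s x‖₊ : ℝ≥0∞) ≤
        ENNReal.ofReal (2*CK) * (‖g s (x + c) v‖₊ : ℝ≥0∞)
        + ENNReal.ofReal CK * (‖p s (x + c) 1‖₊ : ℝ≥0∞)
        + ENNReal.ofReal CK * (‖p s (x + c) (-1)‖₊ : ℝ≥0∞) := by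
      intro x
      simp only [← enorm_eq_nnnorm]
      rw [Real.enorm_eq_ofReal_abs, Real.enorm_eq_ofReal_abs, Real.enorm_eq_ofReal_abs,
        Real.enorm_eq_ofReal_abs,
        ← ENNReal.ofReal_mul (by positivity), ← ENNReal.ofReal_mul (le_of_lt hCK),
        ← ENNReal.ofReal_mul (le_of_lt hCK),
        ← ENNReal.ofReal_add (by positivity) (by positivity),
        ← ENNReal.ofReal_add (by positivity) (by positivity)]
      apply ENNReal.ofReal_le_ofReal
      have hrw : F s x = -((K (x + c) 1 v + K (x + c) (-1) v) * g s (x + c) v)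
          + (K (x + c) 1 v * p s (x + c) 1 + K (x + c) (-1) v * p s (x + c) (-1)) := by
        simp only [hF_def, hc_def]
      rw [hrw]
      have e1 : |(K (x + c) 1 v + K (x + c) (-1) v) * g s (x + c) v|
          ≤ 2*CK * |g s (x + c) v| := by
        rw [abs_mul, abs_of_nonneg (add_nonneg (hK_nonneg _ _ _) (hK_nonneg _ _ _))]
        apply mul_le_mul_of_nonneg_right _ (abs_nonneg _)
        linarith [hK_bdd (x + c) 1 v, hK_bdd (x + c) (-1) v]
      have e2 : |K (x + c) 1 v * p s (x + c) 1| ≤ CK * |p s (x + c) 1| := by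
        rw [abs_mul, abs_of_nonneg (hK_nonneg _ _ _)]
        exact mul_le_mul_of_nonneg_right (hK_bdd _ _ _) (abs_nonneg _)
      have e3 : |K (x + c) (-1) v * p s (x + c) (-1)| ≤ CK * |p s (x + c) (-1)| := by
        rw [abs_mul, abs_of_nonneg (hK_nonneg _ _ _)]
        exact mul_le_mul_of_nonneg_right (hK_bdd _ _ _) (abs_nonneg _)
      calc |(-((K (x + c) 1 v + K (x + c) (-1) v) * g s (x + c) v))
            + (K (x + c) 1 v * p s (x + c) 1 + K (x + c) (-1) v * p s (x + c) (-1))|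
          ≤ |(K (x + c) 1 v + K (x + c) (-1) v) * g s (x + c) v|
            + (|K (x + c) 1 v * p s (x + c) 1| + |K (x + c) (-1) v * p s (x + c) (-1)|) := by
            refine le_trans (abs_add_le _ _) ?_
            rw [abs_neg]
            exact add_le_add_right (abs_add_le _ _) _
        _ ≤ 2*CK * |g s (x + c) v| + (CK * |p s (x + c) 1| + CK * |p s (x + c) (-1)|) := by
            exact add_le_add e1 (add_le_add e2 e3)
        _ = 2*CK * |g s (x + c) v| + CK * |p s (x + c) 1| + CK * |p s (x + c) (-1)| := by ring
    have hshift : Measurable fun x : ℝ => x + c := measurable_id.add_const c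
    have hmg1 : Measurable fun x : ℝ => (‖g s (x + c) v‖₊ : ℝ≥0∞) :=
      ((hg_meas.comp (show Measurable fun x : ℝ => ((s, x + c, v) : ℝ × ℝ × ℝ) from
        measurable_const.prodMk (hshift.prodMk measurable_const)))).enorm
    have hmp1 : Measurable fun x : ℝ => (‖p s (x + c) 1‖₊ : ℝ≥0∞) :=
      ((hp_meas.comp (show Measurable fun x : ℝ => ((s, x + c, (1:ℝ)) : ℝ × ℝ × ℝ) from
        measurable_const.prodMk (hshift.prodMk measurable_const)))).enorm
    have hmp2 : Measurable fun x : ℝ => (‖p s (x + c) (-1)‖₊ : ℝ≥0∞) :=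
      ((hp_meas.comp (show Measurable fun x : ℝ => ((s, x + c, (-1:ℝ)) : ℝ × ℝ × ℝ) from
        measurable_const.prodMk (hshift.prodMk measurable_const)))).enorm
    calc (∫⁻ x, (‖F s x‖₊ : ℝ≥0∞))
        ≤ ∫⁻ x, (ENNReal.ofReal (2*CK) * (‖g s (x + c) v‖₊ : ℝ≥0∞)
          + ENNReal.ofReal CK * (‖p s (x + c) 1‖₊ : ℝ≥0∞)
          + ENNReal.ofReal CK * (‖p s (x + c) (-1)‖₊ : ℝ≥0∞)) := lintegral_mono hpt
      _ = ENNReal.ofReal (2*CK) * (∫⁻ x, (‖g s (x + c) v‖₊ : ℝ≥0∞))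
          + ENNReal.ofReal CK * (∫⁻ x, (‖p s (x + c) 1‖₊ : ℝ≥0∞))
          + ENNReal.ofReal CK * (∫⁻ x, (‖p s (x + c) (-1)‖₊ : ℝ≥0∞)) := by
          rw [lintegral_add_left (f := fun x => ENNReal.ofReal (2*CK) * (‖g s (x + c) v‖₊ : ℝ≥0∞)
              + ENNReal.ofReal CK * (‖p s (x + c) 1‖₊ : ℝ≥0∞))
              ((hmg1.const_mul _).add (hmp1.const_mul _)),
            lintegral_add_left (hmg1.const_mul _),
            lintegral_const_mul _ hmg1, lintegral_const_mul _ hmp1, lintegral_const_mul _ hmp2]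
      _ = ENNReal.ofReal (2*CK) * (∫⁻ x, (‖g s x v‖₊ : ℝ≥0∞))
          + ENNReal.ofReal CK * (∫⁻ x, (‖p s x 1‖₊ : ℝ≥0∞))
          + ENNReal.ofReal CK * (∫⁻ x, (‖p s x (-1)‖₊ : ℝ≥0∞)) := by
          rw [lintegral_add_right_eq_self (fun y => (‖g s y v‖₊ : ℝ≥0∞)) c,
            lintegral_add_right_eq_self (fun y => (‖p s y 1‖₊ : ℝ≥0∞)) c,
            lintegral_add_right_eq_self (fun y => (‖p s y (-1)‖₊ : ℝ≥0∞)) c]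
      _ = ENNReal.ofReal (2*CK) * ENNReal.ofReal (bg s v)
          + ENNReal.ofReal CK * ENNReal.ofReal (bp s 1)
          + ENNReal.ofReal CK * ENNReal.ofReal (bp s (-1)) := by
          simp only [← enorm_eq_nnnorm]
          rw [← ofReal_integral_norm_eq_lintegral_enorm (hg_int s hsIcc v hv),
            ← ofReal_integral_norm_eq_lintegral_enorm (hp_int s hsIcc 1 h1V),
            ← ofReal_integral_norm_eq_lintegral_enorm (hp_int s hsIcc (-1) h2V)]
          simp only [Real.norm_eq_abs, hbg_def, hbp_def]
      _ = ENNReal.ofReal (2*CK * bg s v + CK * bp s 1 + CK * bp s (-1)) := by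
          rw [← ENNReal.ofReal_mul (by positivity), ← ENNReal.ofReal_mul (le_of_lt hCK),
            ← ENNReal.ofReal_mul (le_of_lt hCK),
            ← ENNReal.ofReal_add (by positivity) (by positivity),
            ← ENNReal.ofReal_add (by positivity) (by positivity)]
  -- step 4 : convert outer lintegral to a real interval integral
  set R : ℝ → ℝ := fun s => 2*CK * bg s v + CK * bp s 1 + CK * bp s (-1) with hR_def
  have hR_meas : Measurable R :=
    ((((hbg_meas v).const_mul _).add ((hbp_meas 1).const_mul _)).add ((hbp_meas (-1)).const_mul _))
  have hR_nonneg : ∀ s, 0 ≤ R s := by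
    intro s
    have := hbg_nonneg s v; have := hbp_nonneg s 1; have := hbp_nonneg s (-1)
    positivity
  have hR_int : IntegrableOn R (Ioc t T) := by
    refine Integrable.mono' (g := fun _ => 2*CK*Cg + CK*Cp + CK*Cp)
      (integrableOn_const (C := 2*CK*Cg + CK*Cp + CK*Cp) measure_Ioc_lt_top.ne)
      hR_meas.aestronglyMeasurable ?_
    rw [ae_restrict_iff' measurableSet_Ioc]
    refine ae_of_all _ fun s hs => ?_
    have hsIcc : s ∈ Icc (0:ℝ) T := ⟨le_trans ht.1 hs.1.le, hs.2⟩
    rw [Real.norm_eq_abs, abs_of_nonneg (hR_nonneg s)]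
    have b1 := hCg s hsIcc v hv
    have b2 := hp_bd s hsIcc 1 h1V
    have b3 := hp_bd s hsIcc (-1) h2V
    simp only [hR_def]
    have h1 : 2*CK * bg s v ≤ 2*CK*Cg := by
      apply mul_le_mul_of_nonneg_left _ (by positivity); exact b1
    have h2 : CK * bp s 1 ≤ CK*Cp := mul_le_mul_of_nonneg_left b2 (le_of_lt hCK)
    have h3 : CK * bp s (-1) ≤ CK*Cp := mul_le_mul_of_nonneg_left b3 (le_of_lt hCK)
    linarith
  have step4 : (∫⁻ s in Ioc t T, ENNReal.ofReal (R s)) = ENNReal.ofReal (∫ s in Ioc t T, R s) :=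
    (ofReal_integral_eq_lintegral_ofReal hR_int (ae_of_all _ hR_nonneg)).symm
  -- combine
  have hgl : (∫⁻ x, (‖g t x v‖₊ : ℝ≥0∞)) = ENNReal.ofReal (bg t v) := by
    simp only [← enorm_eq_nnnorm]
    rw [← ofReal_integral_norm_eq_lintegral_enorm (hg_int t ht v hv)]
    simp only [Real.norm_eq_abs, hbg_def]
  have main : ENNReal.ofReal (bg t v) ≤ ENNReal.ofReal (∫ s in Ioc t T, R s) := by
    rw [← hgl, ← step4]
    refine le_trans step2 ?_
    exact setLIntegral_mono (by exact ENNReal.measurable_ofReal.comp hR_meas) step3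
  have hfin : bg t v ≤ ∫ s in Ioc t T, R s := by
    have hRnn : 0 ≤ ∫ s in Ioc t T, R s := setIntegral_nonneg measurableSet_Ioc fun s _ => hR_nonneg s
    exact (ENNReal.ofReal_le_ofReal_iff hRnn).1 main
  rw [intervalIntegral.integral_of_le htT]
  exact hfin

lemma f_sup_bound {T CK Cφ : ℝ} (hT : 0 < T) (hCK : 0 < CK) (hCφ : 0 ≤ Cφ)
    {K : ℝ → ℝ → ℝ → ℝ}
    (hK_meas : Measurable fun q : ℝ × ℝ × ℝ => K q.1 q.2.1 q.2.2)
    (hK_nonneg : ∀ x v v', 0 ≤ K x v v') (hK_bdd : ∀ x v v', K x v v' ≤ CK)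
    {φ : ℝ → ℝ → ℝ} (hφ_bds : ∀ x v, 0 ≤ φ x v ∧ φ x v ≤ Cφ)
    {f : ℝ → ℝ → ℝ → ℝ} (hf : IsMildF T K φ (fun _ _ _ => 0) f) :
    ∀ t ∈ Icc (0:ℝ) T, ∀ x : ℝ, ∀ v ∈ ({1, -1} : Set ℝ),
      |f t x v| ≤ Cφ * Real.exp (4 * CK * t) := by
  obtain ⟨hf_meas, ⟨C, hC⟩, hf_eq⟩ := hf
  have hC0 : 0 ≤ C := le_trans (abs_nonneg _) (hC 0 0 1)
  have key : ∀ n : ℕ, ∀ t ∈ Icc (0:ℝ) T, ∀ x : ℝ, ∀ v ∈ ({1, -1} : Set ℝ),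
      |f t x v| ≤ Cφ * Real.exp (4 * CK * t) + C * (4 * CK * t) ^ n / (Nat.factorial n) := by
    intro n
    induction n with
    | zero =>
      intro t ht x v hv
      have h1 : 1 ≤ Real.exp (4 * CK * t) := Real.one_le_exp (mul_nonneg (by positivity) ht.1)
      have := hC t x v
      simp only [pow_zero, Nat.factorial_zero]
      push_cast
      nlinarith
    | succ n ih =>
      intro t ht x v hv
      have ht0 : 0 ≤ t := ht.1
      set G : ℝ → ℝ := fun s =>
        K (x - v * (t - s)) v 1 * f s (x - v * (t - s)) 1
          + K (x - v * (t - s)) v (-1) * f s (x - v * (t - s)) (-1)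
          - (K (x - v * (t - s)) 1 v + K (x - v * (t - s)) (-1) v)
              * f s (x - v * (t - s)) v
          + (0:ℝ) with hG_def
      have heq : f t x v = φ (x - v * t) v + ∫ s in (0:ℝ)..t, G s := by
        have := hf_eq t ht x v hv
        simpa [hG_def] using this
      -- measurability + boundedness of G
      have hshift : Measurable fun s : ℝ => x - v * (t - s) := by fun_prop
      have hmK : ∀ a b : ℝ, Measurable fun s : ℝ => K (x - v * (t - s)) a b := fun a b =>
        hK_meas.comp (show Measurable fun s : ℝ => ((x - v * (t - s), a, b) : ℝ × ℝ × ℝ) from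
          hshift.prodMk measurable_const)
      have hmf : ∀ w : ℝ, Measurable fun s : ℝ => f s (x - v * (t - s)) w := fun w =>
        hf_meas.comp (show Measurable fun s : ℝ => ((s, x - v * (t - s), w) : ℝ × ℝ × ℝ) from
          measurable_id.prodMk (hshift.prodMk measurable_const))
      have hG_meas : Measurable G := by
        apply Measurable.add _ measurable_const
        exact (((hmK v 1).mul (hmf 1)).add ((hmK v (-1)).mul (hmf (-1)))).sub
          (((hmK 1 v).add (hmK (-1) v)).mul (hmf v))
      have hG_bd : ∀ s, |G s| ≤ 4 * CK * C := by
        intro s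
        set y := x - v * (t - s) with hy
        have e1 : |K y v 1 * f s y 1| ≤ CK * C := by
          rw [abs_mul, abs_of_nonneg (hK_nonneg _ _ _)]
          exact mul_le_mul (hK_bdd _ _ _) (hC _ _ _) (abs_nonneg _) hCK.le
        have e2 : |K y v (-1) * f s y (-1)| ≤ CK * C := by
          rw [abs_mul, abs_of_nonneg (hK_nonneg _ _ _)]
          exact mul_le_mul (hK_bdd _ _ _) (hC _ _ _) (abs_nonneg _) hCK.le
        have e3 : |(K y 1 v + K y (-1) v) * f s y v| ≤ 2 * CK * C := by
          rw [abs_mul, abs_of_nonneg (add_nonneg (hK_nonneg _ _ _) (hK_nonneg _ _ _))]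
          have h1 : K y 1 v + K y (-1) v ≤ 2 * CK := by
            linarith [hK_bdd y 1 v, hK_bdd y (-1) v]
          have := mul_le_mul h1 (hC s y v) (abs_nonneg _) (by positivity)
          linarith
        have : |G s| ≤ |K y v 1 * f s y 1| + |K y v (-1) * f s y (-1)|
            + |(K y 1 v + K y (-1) v) * f s y v| := by
          simp only [hG_def, add_zero]
          rw [← hy]
          have hre : K y v 1 * f s y 1 + K y v (-1) * f s y (-1)
              - (K y 1 v + K y (-1) v) * f s y v
              = K y v 1 * f s y 1 + K y v (-1) * f s y (-1)
              + (-((K y 1 v + K y (-1) v) * f s y v)) := by ring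
          rw [hre]
          refine le_trans (abs_add_le _ _) ?_
          rw [abs_neg]
          exact add_le_add_left (abs_add_le _ _) _
        linarith
      have hG_int : IntervalIntegrable G volume 0 t := by
        rw [intervalIntegrable_iff]
        refine Integrable.mono' (g := fun _ => 4 * CK * C)
          (integrableOn_const (C := 4 * CK * C) measure_Ioc_lt_top.ne)
          hG_meas.aestronglyMeasurable (ae_of_all _ ?_)
        intro s; rw [Real.norm_eq_abs]; exact hG_bd s
      -- bound the integral using induction hypothesis
      have hBcont : Continuous fun s : ℝ =>
          4 * CK * (Cφ * Real.exp (4 * CK * s) + C * (4 * CK * s) ^ n / (Nat.factorial n)) := by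
        fun_prop
      have hGb : ∀ s ∈ Icc (0:ℝ) t, |G s| ≤
          4 * CK * (Cφ * Real.exp (4 * CK * s) + C * (4 * CK * s) ^ n / (Nat.factorial n)) := by
        intro s hs
        have hsIcc : s ∈ Icc (0:ℝ) T := ⟨hs.1, le_trans hs.2 ht.2⟩
        set y := x - v * (t - s) with hy
        have ihb : ∀ w ∈ ({1,-1} : Set ℝ), |f s y w|
            ≤ Cφ * Real.exp (4 * CK * s) + C * (4 * CK * s) ^ n / (Nat.factorial n) := fun w hw =>
          ih s hsIcc y w hw
        have h1V : (1:ℝ) ∈ ({1,-1} : Set ℝ) := by simp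
        have h2V : (-1:ℝ) ∈ ({1,-1} : Set ℝ) := by simp
        have b1 := ihb 1 h1V
        have b2 := ihb (-1) h2V
        have bv := ihb v hv
        set B := Cφ * Real.exp (4 * CK * s) + C * (4 * CK * s) ^ n / (Nat.factorial n) with hB
        have hB0 : 0 ≤ B := le_trans (abs_nonneg _) bv
        have e1 : |K y v 1 * f s y 1| ≤ CK * B := by
          rw [abs_mul, abs_of_nonneg (hK_nonneg _ _ _)]
          exact mul_le_mul (hK_bdd _ _ _) b1 (abs_nonneg _) hCK.le
        have e2 : |K y v (-1) * f s y (-1)| ≤ CK * B := by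
          rw [abs_mul, abs_of_nonneg (hK_nonneg _ _ _)]
          exact mul_le_mul (hK_bdd _ _ _) b2 (abs_nonneg _) hCK.le
        have e3 : |(K y 1 v + K y (-1) v) * f s y v| ≤ 2 * CK * B := by
          rw [abs_mul, abs_of_nonneg (add_nonneg (hK_nonneg _ _ _) (hK_nonneg _ _ _))]
          have h1 : K y 1 v + K y (-1) v ≤ 2 * CK := by
            linarith [hK_bdd y 1 v, hK_bdd y (-1) v]
          have := mul_le_mul h1 bv (abs_nonneg _) (by positivity)
          linarith
        have habs : |G s| ≤ |K y v 1 * f s y 1| + |K y v (-1) * f s y (-1)|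
            + |(K y 1 v + K y (-1) v) * f s y v| := by
          simp only [hG_def, add_zero]
          rw [← hy]
          have hre : K y v 1 * f s y 1 + K y v (-1) * f s y (-1)
              - (K y 1 v + K y (-1) v) * f s y v
              = K y v 1 * f s y 1 + K y v (-1) * f s y (-1)
              + (-((K y 1 v + K y (-1) v) * f s y v)) := by ring
          rw [hre]
          refine le_trans (abs_add_le _ _) ?_
          rw [abs_neg]
          exact add_le_add_left (abs_add_le _ _) _
        linarith
      have hint2 : ∫ s in (0:ℝ)..t,
          (4 * CK * (Cφ * Real.exp (4 * CK * s) + C * (4 * CK * s) ^ n / (Nat.factorial n)))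
          = Cφ * (Real.exp (4 * CK * t) - 1) + C * (4 * CK * t) ^ (n+1) / (Nat.factorial (n+1)) := by
        have hc4 : (4 * CK) ≠ 0 := by positivity
        have hsplit : (fun s : ℝ =>
            4 * CK * (Cφ * Real.exp (4 * CK * s) + C * (4 * CK * s) ^ n / (Nat.factorial n)))
            = fun s : ℝ => (4 * CK * Cφ) * Real.exp (4 * CK * s)
              + (4 * CK * C * (4 * CK) ^ n / (Nat.factorial n)) * s ^ n := by
          funext s
          rw [mul_pow]
          ring
        rw [hsplit, intervalIntegral.integral_add
          ((by fun_prop : Continuous fun s : ℝ => 4 * CK * Cφ * Real.exp (4 * CK * s)).intervalIntegrable 0 t)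
          ((by fun_prop : Continuous fun s : ℝ => (4 * CK * C * (4 * CK) ^ n / (Nat.factorial n)) * s ^ n).intervalIntegrable 0 t),
          intervalIntegral.integral_const_mul, intervalIntegral.integral_const_mul,
          myint_exp hc4, integral_pow]
        rw [Nat.factorial_succ, mul_pow]
        push_cast
        have hfac : (Nat.factorial n : ℝ) ≠ 0 := by positivity
        field_simp
        rw [mul_zero, Real.exp_zero]
        ring
      calc |f t x v| ≤ |φ (x - v * t) v| + |∫ s in (0:ℝ)..t, G s| := by
            rw [heq]; exact abs_add_le _ _
        _ ≤ Cφ + ∫ s in (0:ℝ)..t, |G s| := by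
            have h1 : |φ (x - v * t) v| ≤ Cφ := by
              rw [abs_of_nonneg (hφ_bds _ _).1]; exact (hφ_bds _ _).2
            have h2 := intervalIntegral.abs_integral_le_integral_abs (μ := volume) (f := G) ht0
            linarith
        _ ≤ Cφ + ∫ s in (0:ℝ)..t,
            (4 * CK * (Cφ * Real.exp (4 * CK * s) + C * (4 * CK * s) ^ n / (Nat.factorial n))) := by
            have := intervalIntegral.integral_mono_on ht0 hG_int.abs
              (hBcont.intervalIntegrable 0 t) hGb
            linarith
        _ = Cφ * Real.exp (4 * CK * t) + C * (4 * CK * t) ^ (n+1) / (Nat.factorial (n+1)) := by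
            rw [hint2]; ring
  intro t ht x v hv
  have hlim : Tendsto (fun n : ℕ => Cφ * Real.exp (4 * CK * t)
      + C * (4 * CK * t) ^ n / (Nat.factorial n)) atTop (nhds (Cφ * Real.exp (4 * CK * t))) := by
    have h0 : Tendsto (fun n : ℕ => (4 * CK * t) ^ n / (Nat.factorial n)) atTop (nhds 0) :=
      FloorSemiring.tendsto_pow_div_factorial_atTop (4 * CK * t)
    have := (h0.const_mul C).const_add (Cφ * Real.exp (4 * CK * t))
    simpa [mul_div_assoc] using this
  refine ge_of_tendsto hlim ?_
  filter_upwards with n using key n t ht x v hv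

/-- bound on the contribution of the remainder `ḡ_{>N}` of the singular
decomposition of the adjoint solution with final datum `μ₂ − μ₁`:
`|∫₀ᵀ∫_I f(v') ḡ_{>N}(v) dx dt| ≤ 2 T² C_K C_φ e^{4C_K T} (e^{2C_K T} − 1)^N C_μ`. -/
theorem singular_decomposition_remainder_bound
    (T CK Cφ Cμ : ℝ) (N : ℕ)
    (hT : 0 < T) (hCK : 0 < CK) (hCφ : 0 ≤ Cφ)
    (K : ℝ → ℝ → ℝ → ℝ)
    (hK_meas : Measurable fun p : ℝ × ℝ × ℝ => K p.1 p.2.1 p.2.2)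
    (hK_nonneg : ∀ x v v', 0 ≤ K x v v') (hK_bdd : ∀ x v v', K x v v' ≤ CK)
    (μ₁ μ₂ : ℝ → ℝ) (hμ₁_int : Integrable μ₁) (hμ₂_int : Integrable μ₂)
    (hμ₁ : (∫ x : ℝ, |μ₁ x|) ≤ Cμ) (hμ₂ : (∫ x : ℝ, |μ₂ x|) ≤ Cμ)
    (gbar : ℕ → ℝ → ℝ → ℝ → ℝ)
    (hgbar0_meas : Measurable fun p : ℝ × ℝ × ℝ => gbar 0 p.1 p.2.1 p.2.2)
    (hgbar0_int : ∀ t ∈ Set.Icc (0 : ℝ) T, ∀ v ∈ ({1, -1} : Set ℝ),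
      Integrable (fun x => gbar 0 t x v))
    (hgbar0 : ∀ t ∈ Set.Icc (0 : ℝ) T, ∀ x : ℝ, ∀ v ∈ ({1, -1} : Set ℝ),
      gbar 0 t x v =
        Real.exp (-∫ τ in (0 : ℝ)..(T - t), (K (x + v * τ) 1 v + K (x + v * τ) (-1) v)) *
          (μ₂ (x + v * (T - t)) - μ₁ (x + v * (T - t))))
    (hgbar_rec : ∀ n : ℕ, IsMildG T K 0 (fun _ _ => 0)
      (fun s y v => K y 1 v * gbar n s y 1 + K y (-1) v * gbar n s y (-1)) (gbar (n + 1)))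
    (grem : ℝ → ℝ → ℝ → ℝ)
    (hgrem : IsMildG T K 0 (fun _ _ => 0)
      (fun s y v => K y 1 v * (gbar N s y 1 + grem s y 1)
        + K y (-1) v * (gbar N s y (-1) + grem s y (-1))) grem)
    (φ : ℝ → ℝ → ℝ) (hφ_bds : ∀ x v, 0 ≤ φ x v ∧ φ x v ≤ Cφ)
    (f : ℝ → ℝ → ℝ → ℝ) (hf : IsMildF T K φ (fun _ _ _ => 0) f) :
    ∀ I : Set ℝ, MeasurableSet I →
      ∀ v ∈ ({1, -1} : Set ℝ), ∀ v' ∈ ({1, -1} : Set ℝ),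
        |∫ t in (0 : ℝ)..T, ∫ x in I, f t x v' * grem t x v|
          ≤ 2 * T ^ 2 * CK * Cφ * Real.exp (4 * CK * T)
              * (Real.exp (2 * CK * T) - 1) ^ N * Cμ := by
  intro I hI v hv v' hv'
  have h1V : (1:ℝ) ∈ ({1,-1} : Set ℝ) := by simp
  have h2V : (-1:ℝ) ∈ ({1,-1} : Set ℝ) := by simp
  have hCμ0 : 0 ≤ Cμ := le_trans (integral_nonneg fun x => abs_nonneg _) hμ₁
  have hA0 : 0 ≤ Real.exp (2*CK*T) - 1 := by
    have := Real.one_le_exp (show (0:ℝ) ≤ 2*CK*T by positivity); linarith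
  set A : ℝ := Real.exp (2*CK*T) - 1 with hA_def
  have hCA : ∀ k : ℕ, (0:ℝ) ≤ 2*Cμ*A^k :=
    fun k => mul_nonneg (mul_nonneg (by norm_num) hCμ0) (pow_nonneg hA0 k)
  have hCA4 : (0:ℝ) ≤ 4*CK*Cμ*A^N :=
    mul_nonneg (mul_nonneg (by positivity) hCμ0) (pow_nonneg hA0 N)
  have hgbar_meas : ∀ n : ℕ, Measurable fun q : ℝ × ℝ × ℝ => gbar n q.1 q.2.1 q.2.2 := by
    intro n; cases n with
    | zero => exact hgbar0_meas
    | succ m => exact (hgbar_rec m).1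
  have hgbar_int : ∀ n : ℕ, ∀ t ∈ Icc (0:ℝ) T, ∀ w ∈ ({1,-1} : Set ℝ),
      Integrable fun x => gbar n t x w := by
    intro n; cases n with
    | zero => exact hgbar0_int
    | succ m => exact (hgbar_rec m).2.1
  -- L¹ bound for gbar n
  have hbn : ∀ n : ℕ, ∀ t ∈ Icc (0:ℝ) T, ∀ w ∈ ({1,-1} : Set ℝ),
      (∫ x : ℝ, |gbar n t x w|) ≤ 2*Cμ*A^n * Real.exp (2*CK*(T-t)) := by
    intro n
    induction n with
    | zero =>
      intro t ht w hw
      have hExp1 : 1 ≤ Real.exp (2*CK*(T-t)) := Real.one_le_exp (by nlinarith [ht.2, hCK])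
      have hpt : ∀ x : ℝ, |gbar 0 t x w| ≤ |μ₂ (x + w*(T-t))| + |μ₁ (x + w*(T-t))| := by
        intro x
        rw [hgbar0 t ht x w hw]
        have hJ : (0:ℝ) ≤ ∫ τ in (0:ℝ)..(T-t), (K (x + w*τ) 1 w + K (x + w*τ) (-1) w) :=
          intervalIntegral.integral_nonneg (by linarith [ht.2])
            (fun τ _ => add_nonneg (hK_nonneg _ _ _) (hK_nonneg _ _ _))
        have he1 : Real.exp (-(∫ τ in (0:ℝ)..(T-t),
            (K (x + w*τ) 1 w + K (x + w*τ) (-1) w))) ≤ 1 :=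
          Real.exp_le_one_iff.2 (by linarith)
        rw [abs_mul, abs_of_nonneg (Real.exp_nonneg _)]
        have h2 : |μ₂ (x + w*(T-t)) - μ₁ (x + w*(T-t))|
            ≤ |μ₂ (x + w*(T-t))| + |μ₁ (x + w*(T-t))| := by
          have := abs_add_le (μ₂ (x + w*(T-t))) (-(μ₁ (x + w*(T-t))))
          simpa [sub_eq_add_neg] using this
        calc _ ≤ 1 * |μ₂ (x + w*(T-t)) - μ₁ (x + w*(T-t))| :=
              mul_le_mul_of_nonneg_right he1 (abs_nonneg _)
          _ = |μ₂ (x + w*(T-t)) - μ₁ (x + w*(T-t))| := one_mul _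
          _ ≤ _ := h2
      have hi2 : Integrable fun x : ℝ => |μ₂ (x + w*(T-t))| := (hμ₂_int.comp_add_right _).abs
      have hi1 : Integrable fun x : ℝ => |μ₁ (x + w*(T-t))| := (hμ₁_int.comp_add_right _).abs
      calc (∫ x : ℝ, |gbar 0 t x w|)
          ≤ ∫ x : ℝ, (|μ₂ (x + w*(T-t))| + |μ₁ (x + w*(T-t))|) :=
            integral_mono ((hgbar0_int t ht w hw).abs) (hi2.add hi1) hpt
        _ = (∫ x : ℝ, |μ₂ x|) + (∫ x : ℝ, |μ₁ x|) := by
            rw [integral_add hi2 hi1,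
              integral_add_right_eq_self (fun y => |μ₂ y|) (w*(T-t)),
              integral_add_right_eq_self (fun y => |μ₁ y|) (w*(T-t))]
        _ ≤ 2*Cμ*A^0 * Real.exp (2*CK*(T-t)) := by
            simp only [pow_zero]
            nlinarith [hμ₁, hμ₂, hCμ0]
    | succ m ih =>
      intro t ht w hw
      obtain ⟨Cg, hCg⟩ := (hgbar_rec m).2.2.1
      have hCp : ∀ s ∈ Icc (0:ℝ) T, ∀ w' ∈ ({1,-1} : Set ℝ),
          (∫ x : ℝ, |gbar m s x w'|) ≤ 2*Cμ*A^m * Real.exp (2*CK*T) := by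
        intro s hs w' hw'
        refine le_trans (ih s hs w' hw') ?_
        have h1 : Real.exp (2*CK*(T-s)) ≤ Real.exp (2*CK*T) :=
          Real.exp_le_exp.2 (by nlinarith [hs.1])
        exact mul_le_mul_of_nonneg_left h1 (hCA m)
      have hrec := l1_recursion hT hCK hK_meas hK_nonneg hK_bdd (hgbar_meas m)
        (hgbar_int m) hCp (hgbar_rec m)
      set u : ℝ → ℝ := fun s =>
        max (∫ x : ℝ, |gbar (m+1) s x 1|) (∫ x : ℝ, |gbar (m+1) s x (-1)|) with hu_def
      have hu_meas : Measurable u :=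
        (bmeas (hgbar_meas (m+1)) 1).max (bmeas (hgbar_meas (m+1)) (-1))
      have hu_nonneg : ∀ s, 0 ≤ u s := fun s =>
        le_trans (integral_nonneg fun x => abs_nonneg _) (le_max_left _ _)
      have hu_bd : ∀ s ∈ Icc (0:ℝ) T, |u s| ≤ Cg := by
        intro s hs
        rw [abs_of_nonneg (hu_nonneg s)]
        exact max_le (hCg s hs 1 h1V) (hCg s hs (-1) h2V)
      have hCg0 : 0 ≤ Cg := le_trans (abs_nonneg _) (hu_bd 0 ⟨le_refl _, hT.le⟩)
      have hq_def : ∀ s : ℝ, (0:ℝ) ≤ 2*CK*(2*Cμ*A^m * Real.exp (2*CK*(T-s))) := by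
        intro s; positivity
      have hu_rec : ∀ r ∈ Icc (0:ℝ) T, u r ≤ ∫ s in r..T,
          (2*CK * u s + 2*CK*(2*Cμ*A^m * Real.exp (2*CK*(T-s)))) := by
        intro r hr
        have hib : IntervalIntegrable
            (fun s => 2*CK * u s + 2*CK*(2*Cμ*A^m * Real.exp (2*CK*(T-s)))) volume r T := by
          apply intint_of_bdd (M := 2*CK*Cg + 2*CK*(2*Cμ*A^m * Real.exp (2*CK*T))) hr.2
            (by fun_prop)
          intro s hs
          have hsIcc : s ∈ Icc (0:ℝ) T := ⟨le_trans hr.1 hs.1, hs.2⟩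
          have hb1 : |u s| ≤ Cg := hu_bd s hsIcc
          have hb2 : Real.exp (2*CK*(T-s)) ≤ Real.exp (2*CK*T) :=
            Real.exp_le_exp.2 (by nlinarith [hsIcc.1])
          have m2 : 2*Cμ*A^m * Real.exp (2*CK*(T-s)) ≤ 2*Cμ*A^m * Real.exp (2*CK*T) :=
            mul_le_mul_of_nonneg_left hb2 (hCA m)
          have v1 : 0 ≤ 2*CK*u s := mul_nonneg (by positivity) (hu_nonneg s)
          have v2 : 2*CK*u s ≤ 2*CK*Cg :=
            mul_le_mul_of_nonneg_left (abs_le.1 hb1).2 (by positivity)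
          have v3 : 2*CK*(2*Cμ*A^m * Real.exp (2*CK*(T-s)))
              ≤ 2*CK*(2*Cμ*A^m * Real.exp (2*CK*T)) :=
            mul_le_mul_of_nonneg_left m2 (by positivity)
          have v4 : 0 ≤ 2*CK*(2*Cμ*A^m * Real.exp (2*CK*(T-s))) :=
            mul_nonneg (by positivity) (mul_nonneg (hCA m) (Real.exp_nonneg _))
          rw [abs_le]
          constructor <;> linarith
        have hcomp : ∀ w'' , w'' ∈ ({1,-1} : Set ℝ) →
            (∫ x : ℝ, |gbar (m+1) r x w''|) ≤ ∫ s in r..T,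
            (2*CK * u s + 2*CK*(2*Cμ*A^m * Real.exp (2*CK*(T-s)))) := by
          intro w'' hw''
          refine le_trans (hrec r hr w'' hw'') ?_
          have hia : IntervalIntegrable (fun s =>
              2*CK * (∫ x : ℝ, |gbar (m+1) s x w''|) + CK * (∫ x : ℝ, |gbar m s x 1|)
              + CK * (∫ x : ℝ, |gbar m s x (-1)|)) volume r T := by
            apply intint_of_bdd
              (M := 2*CK*Cg + CK*(2*Cμ*A^m * Real.exp (2*CK*T))
                + CK*(2*Cμ*A^m * Real.exp (2*CK*T))) hr.2
              (((((bmeas (hgbar_meas (m+1)) w'').const_mul _)).add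
                ((bmeas (hgbar_meas m) 1).const_mul _)).add
                ((bmeas (hgbar_meas m) (-1)).const_mul _))
            intro s hs
            have hsIcc : s ∈ Icc (0:ℝ) T := ⟨le_trans hr.1 hs.1, hs.2⟩
            have b1 := hCg s hsIcc w'' hw''
            have b2 := hCp s hsIcc 1 h1V
            have b3 := hCp s hsIcc (-1) h2V
            have nn1 : (0:ℝ) ≤ ∫ x : ℝ, |gbar (m+1) s x w''| :=
              integral_nonneg fun x => abs_nonneg _
            have nn2 : (0:ℝ) ≤ ∫ x : ℝ, |gbar m s x 1| := integral_nonneg fun x => abs_nonneg _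
            have nn3 : (0:ℝ) ≤ ∫ x : ℝ, |gbar m s x (-1)| :=
              integral_nonneg fun x => abs_nonneg _
            have v1 := mul_le_mul_of_nonneg_left b1 (by positivity : (0:ℝ) ≤ 2*CK)
            have v2 := mul_le_mul_of_nonneg_left b2 hCK.le
            have v3 := mul_le_mul_of_nonneg_left b3 hCK.le
            have w1 := mul_nonneg (by positivity : (0:ℝ) ≤ 2*CK) nn1
            have w2 := mul_nonneg hCK.le nn2
            have w3 := mul_nonneg hCK.le nn3
            simp only [Pi.add_apply]
            rw [abs_le]
            constructor <;> linarith
          refine intervalIntegral.integral_mono_on hr.2 hia hib ?_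
          intro s hs
          have hsIcc : s ∈ Icc (0:ℝ) T := ⟨le_trans hr.1 hs.1, hs.2⟩
          have c1 : (∫ x : ℝ, |gbar (m+1) s x w''|) ≤ u s := by
            simp only [Set.mem_insert_iff, Set.mem_singleton_iff] at hw''
            rcases hw'' with rfl | rfl
            · exact le_max_left _ _
            · exact le_max_right _ _
          have c2 := ih s hsIcc 1 h1V
          have c3 := ih s hsIcc (-1) h2V
          have d1 := mul_le_mul_of_nonneg_left c1 (by positivity : (0:ℝ) ≤ 2*CK)
          have d2 := mul_le_mul_of_nonneg_left c2 hCK.le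
          have d3 := mul_le_mul_of_nonneg_left c3 hCK.le
          have e : 2*CK*u s + CK*(2*Cμ*A^m * Real.exp (2*CK*(T-s)))
              + CK*(2*Cμ*A^m * Real.exp (2*CK*(T-s)))
              = 2*CK * u s + 2*CK*(2*Cμ*A^m * Real.exp (2*CK*(T-s))) := by ring
          linarith
        exact max_le (hcomp 1 h1V) (hcomp (-1) h2V)
      have hwsup : ∀ r ∈ Icc (0:ℝ) T,
          (∫ s in r..T, (2*CK * (2*Cμ*A^(m+1) * Real.exp (2*CK*(T-s)))
            + 2*CK*(2*Cμ*A^m * Real.exp (2*CK*(T-s)))))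
          ≤ 2*Cμ*A^(m+1) * Real.exp (2*CK*(T-r)) := by
        intro r hr
        have hcong : (fun s => 2*CK * (2*Cμ*A^(m+1) * Real.exp (2*CK*(T-s)))
            + 2*CK*(2*Cμ*A^m * Real.exp (2*CK*(T-s))))
            = fun s => (4*CK*Cμ*A^(m+1) + 4*CK*Cμ*A^m) * Real.exp (2*CK*(T-s)) := by
          funext s; ring
        rw [hcong, intervalIntegral.integral_const_mul,
          myint_expE (by positivity : (2*CK) ≠ 0) T r]
        have hE1 : 1 ≤ Real.exp (2*CK*(T-r)) := Real.one_le_exp (by nlinarith [hr.2])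
        have hEle : Real.exp (2*CK*(T-r)) ≤ A + 1 := by
          have h1 : Real.exp (2*CK*(T-r)) ≤ Real.exp (2*CK*T) :=
            Real.exp_le_exp.2 (by nlinarith [hr.1])
          rw [hA_def]; linarith
        have hAm : 0 ≤ A^m := pow_nonneg hA0 m
        have hkey : (A + 1) * (Real.exp (2*CK*(T-r)) - 1) ≤ A * Real.exp (2*CK*(T-r)) := by
          nlinarith
        have expand : (4*CK*Cμ*A^(m+1) + 4*CK*Cμ*A^m) * ((Real.exp (2*CK*(T-r)) - 1)/(2*CK))
            = 2*Cμ*A^m*((A+1)*(Real.exp (2*CK*(T-r)) - 1)) := by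
          rw [pow_succ]; field_simp; ring
        rw [expand, pow_succ]
        nlinarith [mul_le_mul_of_nonneg_left hkey
          (by positivity : (0:ℝ) ≤ 2*Cμ*A^m)]
      have hgron := gronwall_backward (T := T) (β := 2*CK) (M := Cg) hT.le (by positivity)
        u (fun s => 2*Cμ*A^(m+1) * Real.exp (2*CK*(T-s)))
        (fun s => 2*CK*(2*Cμ*A^m * Real.exp (2*CK*(T-s))))
        hu_meas hu_bd (by fun_prop) (by fun_prop) hu_rec hwsup
      have hle : (∫ x : ℝ, |gbar (m+1) t x w|) ≤ u t := by
        simp only [Set.mem_insert_iff, Set.mem_singleton_iff] at hw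
        rcases hw with rfl | rfl
        · exact le_max_left _ _
        · exact le_max_right _ _
      exact le_trans hle (hgron t ht)
  -- L¹ bound for grem
  have esq : ∀ y : ℝ, Real.exp y ^ 2 = Real.exp (2*y) := by
    intro y; rw [sq, ← Real.exp_add, two_mul]
  have hgrem' := hgrem
  obtain ⟨hgrem_meas, hgrem_int, ⟨Cr, hCr⟩, hgrem_eq⟩ := hgrem'
  have hbrem : ∀ t ∈ Icc (0:ℝ) T, ∀ w ∈ ({1,-1} : Set ℝ),
      (∫ x : ℝ, |grem t x w|) ≤
        2*Cμ*A^N*(Real.exp (2*CK*(T-t))^2 - Real.exp (2*CK*(T-t))) := by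
    have hp_meas : Measurable fun q : ℝ × ℝ × ℝ =>
        gbar N q.1 q.2.1 q.2.2 + grem q.1 q.2.1 q.2.2 := (hgbar_meas N).add hgrem_meas
    have hp_int : ∀ s ∈ Icc (0:ℝ) T, ∀ w ∈ ({1,-1} : Set ℝ),
        Integrable fun x => gbar N s x w + grem s x w := fun s hs w hw =>
      (hgbar_int N s hs w hw).add (hgrem_int s hs w hw)
    have hbp_le : ∀ s ∈ Icc (0:ℝ) T, ∀ w ∈ ({1,-1} : Set ℝ),
        (∫ x : ℝ, |gbar N s x w + grem s x w|)
          ≤ (∫ x : ℝ, |gbar N s x w|) + ∫ x : ℝ, |grem s x w| := by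
      intro s hs w hw
      rw [← integral_add ((hgbar_int N s hs w hw).abs) ((hgrem_int s hs w hw).abs)]
      exact integral_mono ((hp_int s hs w hw).abs)
        (((hgbar_int N s hs w hw).abs).add ((hgrem_int s hs w hw).abs))
        (fun x => abs_add_le _ _)
    have hp_bd : ∀ s ∈ Icc (0:ℝ) T, ∀ w ∈ ({1,-1} : Set ℝ),
        (∫ x : ℝ, |gbar N s x w + grem s x w|) ≤ 2*Cμ*A^N * Real.exp (2*CK*T) + Cr := by
      intro s hs w hw
      refine le_trans (hbp_le s hs w hw) ?_
      have b1 := hbn N s hs w hw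
      have b2 := hCr s hs w hw
      have h1 : Real.exp (2*CK*(T-s)) ≤ Real.exp (2*CK*T) :=
        Real.exp_le_exp.2 (by nlinarith [hs.1])
      have m2 : 2*Cμ*A^N * Real.exp (2*CK*(T-s)) ≤ 2*Cμ*A^N * Real.exp (2*CK*T) :=
        mul_le_mul_of_nonneg_left h1 (hCA N)
      linarith
    have hrec := l1_recursion (p := fun s y w => gbar N s y w + grem s y w) hT hCK hK_meas
      hK_nonneg hK_bdd hp_meas hp_int hp_bd hgrem
    set u : ℝ → ℝ := fun s =>
      max (∫ x : ℝ, |grem s x 1|) (∫ x : ℝ, |grem s x (-1)|) with hu_def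
    have hu_meas : Measurable u := (bmeas hgrem_meas 1).max (bmeas hgrem_meas (-1))
    have hu_nonneg : ∀ s, 0 ≤ u s := fun s =>
      le_trans (integral_nonneg fun x => abs_nonneg _) (le_max_left _ _)
    have hu_bd : ∀ s ∈ Icc (0:ℝ) T, |u s| ≤ Cr := by
      intro s hs
      rw [abs_of_nonneg (hu_nonneg s)]
      exact max_le (hCr s hs 1 h1V) (hCr s hs (-1) h2V)
    have hCr0 : 0 ≤ Cr := le_trans (abs_nonneg _) (hu_bd 0 ⟨le_refl _, hT.le⟩)
    have hu_rec : ∀ r ∈ Icc (0:ℝ) T, u r ≤ ∫ s in r..T,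
        (4*CK * u s + 4*CK*Cμ*A^N * Real.exp (2*CK*(T-s))) := by
      intro r hr
      have hib : IntervalIntegrable
          (fun s => 4*CK * u s + 4*CK*Cμ*A^N * Real.exp (2*CK*(T-s))) volume r T := by
        apply intint_of_bdd (M := 4*CK*Cr + 4*CK*Cμ*A^N * Real.exp (2*CK*T)) hr.2 (by fun_prop)
        intro s hs
        have hsIcc : s ∈ Icc (0:ℝ) T := ⟨le_trans hr.1 hs.1, hs.2⟩
        have hb1 := abs_le.1 (hu_bd s hsIcc)
        have hb2 : Real.exp (2*CK*(T-s)) ≤ Real.exp (2*CK*T) :=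
          Real.exp_le_exp.2 (by nlinarith [hsIcc.1])
        have v1 : 0 ≤ 4*CK*u s := mul_nonneg (by positivity) (hu_nonneg s)
        have v2 : 4*CK*u s ≤ 4*CK*Cr := mul_le_mul_of_nonneg_left hb1.2 (by positivity)
        have v3 : 4*CK*Cμ*A^N * Real.exp (2*CK*(T-s)) ≤ 4*CK*Cμ*A^N * Real.exp (2*CK*T) :=
          mul_le_mul_of_nonneg_left hb2 hCA4
        have v4 : 0 ≤ 4*CK*Cμ*A^N * Real.exp (2*CK*(T-s)) :=
          mul_nonneg hCA4 (Real.exp_nonneg _)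
        rw [abs_le]
        constructor <;> linarith
      have hcomp : ∀ w'' , w'' ∈ ({1,-1} : Set ℝ) →
          (∫ x : ℝ, |grem r x w''|) ≤ ∫ s in r..T,
          (4*CK * u s + 4*CK*Cμ*A^N * Real.exp (2*CK*(T-s))) := by
        intro w'' hw''
        refine le_trans (hrec r hr w'' hw'') ?_
        have hia : IntervalIntegrable (fun s =>
            2*CK * (∫ x : ℝ, |grem s x w''|)
            + CK * (∫ x : ℝ, |gbar N s x 1 + grem s x 1|)
            + CK * (∫ x : ℝ, |gbar N s x (-1) + grem s x (-1)|)) volume r T := by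
          apply intint_of_bdd
            (M := 2*CK*Cr + CK*(2*Cμ*A^N * Real.exp (2*CK*T) + Cr)
              + CK*(2*Cμ*A^N * Real.exp (2*CK*T) + Cr)) hr.2
            (((((bmeas hgrem_meas w'').const_mul _)).add
              ((bmeas (g := fun s y w => gbar N s y w + grem s y w) hp_meas 1).const_mul _)).add
              ((bmeas (g := fun s y w => gbar N s y w + grem s y w) hp_meas (-1)).const_mul _))
          intro s hs
          have hsIcc : s ∈ Icc (0:ℝ) T := ⟨le_trans hr.1 hs.1, hs.2⟩
          have b1 := hCr s hsIcc w'' hw''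
          have b2 := hp_bd s hsIcc 1 h1V
          have b3 := hp_bd s hsIcc (-1) h2V
          have nn1 : (0:ℝ) ≤ ∫ x : ℝ, |grem s x w''| := integral_nonneg fun x => abs_nonneg _
          have nn2 : (0:ℝ) ≤ ∫ x : ℝ, |gbar N s x 1 + grem s x 1| :=
            integral_nonneg fun x => abs_nonneg _
          have nn3 : (0:ℝ) ≤ ∫ x : ℝ, |gbar N s x (-1) + grem s x (-1)| :=
            integral_nonneg fun x => abs_nonneg _
          have v1 := mul_le_mul_of_nonneg_left b1 (by positivity : (0:ℝ) ≤ 2*CK)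
          have v2 := mul_le_mul_of_nonneg_left b2 hCK.le
          have v3 := mul_le_mul_of_nonneg_left b3 hCK.le
          have w1 := mul_nonneg (by positivity : (0:ℝ) ≤ 2*CK) nn1
          have w2 := mul_nonneg hCK.le nn2
          have w3 := mul_nonneg hCK.le nn3
          simp only [Pi.add_apply]
          rw [abs_le]
          constructor <;> linarith
        refine intervalIntegral.integral_mono_on hr.2 hia hib ?_
        intro s hs
        have hsIcc : s ∈ Icc (0:ℝ) T := ⟨le_trans hr.1 hs.1, hs.2⟩
        have c1 : (∫ x : ℝ, |grem s x w''|) ≤ u s := by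
          simp only [Set.mem_insert_iff, Set.mem_singleton_iff] at hw''
          rcases hw'' with rfl | rfl
          · exact le_max_left _ _
          · exact le_max_right _ _
        have c2 : (∫ x : ℝ, |gbar N s x 1 + grem s x 1|)
            ≤ 2*Cμ*A^N * Real.exp (2*CK*(T-s)) + u s := by
          refine le_trans (hbp_le s hsIcc 1 h1V) ?_
          have hgu : (∫ x : ℝ, |grem s x 1|) ≤ u s := le_max_left _ _
          linarith [hbn N s hsIcc 1 h1V]
        have c3 : (∫ x : ℝ, |gbar N s x (-1) + grem s x (-1)|)
            ≤ 2*Cμ*A^N * Real.exp (2*CK*(T-s)) + u s := by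
          refine le_trans (hbp_le s hsIcc (-1) h2V) ?_
          have hgu : (∫ x : ℝ, |grem s x (-1)|) ≤ u s := le_max_right _ _
          linarith [hbn N s hsIcc (-1) h2V]
        have d1 := mul_le_mul_of_nonneg_left c1 (by positivity : (0:ℝ) ≤ 2*CK)
        have d2 := mul_le_mul_of_nonneg_left c2 hCK.le
        have d3 := mul_le_mul_of_nonneg_left c3 hCK.le
        have e : 2*CK*u s + CK*(2*Cμ*A^N * Real.exp (2*CK*(T-s)) + u s)
            + CK*(2*Cμ*A^N * Real.exp (2*CK*(T-s)) + u s)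
            = 4*CK * u s + 4*CK*Cμ*A^N * Real.exp (2*CK*(T-s)) := by ring
        linarith
      exact max_le (hcomp 1 h1V) (hcomp (-1) h2V)
    have hwsup : ∀ r ∈ Icc (0:ℝ) T,
        (∫ s in r..T, (4*CK * (2*Cμ*A^N*(Real.exp (2*CK*(T-s))^2 - Real.exp (2*CK*(T-s))))
          + 4*CK*Cμ*A^N * Real.exp (2*CK*(T-s))))
        ≤ 2*Cμ*A^N*(Real.exp (2*CK*(T-r))^2 - Real.exp (2*CK*(T-r))) := by
      intro r hr
      have hcong : (fun s => 4*CK * (2*Cμ*A^N*(Real.exp (2*CK*(T-s))^2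
          - Real.exp (2*CK*(T-s)))) + 4*CK*Cμ*A^N * Real.exp (2*CK*(T-s)))
          = fun s => (8*CK*Cμ*A^N) * Real.exp (4*CK*(T-s))
            + (-(4*CK*Cμ*A^N)) * Real.exp (2*CK*(T-s)) := by
        funext s
        have h1 : Real.exp (2*CK*(T-s))^2 = Real.exp (4*CK*(T-s)) := by
          rw [esq, show 2*(2*CK*(T-s)) = 4*CK*(T-s) by ring]
        rw [h1]; ring
      rw [hcong, intervalIntegral.integral_add
        (((by fun_prop : Continuous fun s : ℝ => (8*CK*Cμ*A^N) * Real.exp (4*CK*(T-s)))).intervalIntegrable r T)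
        (((by fun_prop : Continuous fun s : ℝ => (-(4*CK*Cμ*A^N)) * Real.exp (2*CK*(T-s)))).intervalIntegrable r T),
        intervalIntegral.integral_const_mul, intervalIntegral.integral_const_mul,
        myint_expE (by positivity : (4*CK) ≠ 0) T r,
        myint_expE (by positivity : (2*CK) ≠ 0) T r]
      have h2 : Real.exp (4*CK*(T-r)) = Real.exp (2*CK*(T-r))^2 := by
        rw [esq, show 2*(2*CK*(T-r)) = 4*CK*(T-r) by ring]
      rw [h2]
      have hck : CK ≠ 0 := ne_of_gt hCK
      apply le_of_eq
      field_simp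
      ring
    have hgron := gronwall_backward (T := T) (β := 4*CK) (M := Cr) hT.le (by positivity)
      u (fun s => 2*Cμ*A^N*(Real.exp (2*CK*(T-s))^2 - Real.exp (2*CK*(T-s))))
      (fun s => 4*CK*Cμ*A^N * Real.exp (2*CK*(T-s)))
      hu_meas hu_bd (by fun_prop) (by fun_prop) hu_rec hwsup
    intro t ht w hw
    have hle : (∫ x : ℝ, |grem t x w|) ≤ u t := by
      simp only [Set.mem_insert_iff, Set.mem_singleton_iff] at hw
      rcases hw with rfl | rfl
      · exact le_max_left _ _
      · exact le_max_right _ _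
    exact le_trans hle (hgron t ht)
  -- bound on f
  have hfb := f_sup_bound hT hCK hCφ hK_meas hK_nonneg hK_bdd hφ_bds hf
  obtain ⟨hf_meas, ⟨Cf, hCf⟩, hf_eq⟩ := hf
  have hCf0 : 0 ≤ Cf := le_trans (abs_nonneg _) (hCf 0 0 1)
  -- the time integrand
  set F : ℝ → ℝ := fun t => ∫ x in I, f t x v' * grem t x v with hF_def
  have hFG_meas : Measurable fun q : ℝ × ℝ => f q.1 q.2 v' * grem q.1 q.2 v := by
    have hm1 : Measurable fun q : ℝ × ℝ => f q.1 q.2 v' :=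
      hf_meas.comp (show Measurable fun q : ℝ × ℝ => ((q.1, q.2, v') : ℝ × ℝ × ℝ) from
        measurable_fst.prodMk (measurable_snd.prodMk measurable_const))
    have hm2 : Measurable fun q : ℝ × ℝ => grem q.1 q.2 v :=
      hgrem_meas.comp (show Measurable fun q : ℝ × ℝ => ((q.1, q.2, v) : ℝ × ℝ × ℝ) from
        measurable_fst.prodMk (measurable_snd.prodMk measurable_const))
    exact hm1.mul hm2
  have hF_meas : Measurable F := by
    have := (hFG_meas.stronglyMeasurable.integral_prod_right'
      (ν := volume.restrict I)).measurable
    exact this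
  have hfmx : ∀ t, Measurable fun x => f t x v' := by
    intro t
    exact hf_meas.comp (show Measurable fun x : ℝ => ((t, x, v') : ℝ × ℝ × ℝ) from
      measurable_const.prodMk (measurable_id.prodMk measurable_const))
  have habs_step : ∀ t ∈ Icc (0:ℝ) T,
      |F t| ≤ (Cφ * Real.exp (4*CK*t)) * ∫ x : ℝ, |grem t x v| := by
    intro t ht
    have step1 : |F t| ≤ ∫ x in I, |f t x v'| * |grem t x v| := by
      simpa [Real.norm_eq_abs] using norm_integral_le_integral_norm
        (μ := volume.restrict I) (f := fun x => f t x v' * grem t x v)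
    have step2 : (∫ x in I, |f t x v'| * |grem t x v|)
        ≤ ∫ x in I, (Cφ * Real.exp (4*CK*t)) * |grem t x v| := by
      refine integral_mono_of_nonneg
        (ae_of_all _ fun x => mul_nonneg (abs_nonneg _) (abs_nonneg _))
        ((((hgrem_int t ht v hv).abs.const_mul _)).restrict) (ae_of_all _ fun x => ?_)
      exact mul_le_mul_of_nonneg_right (hfb t ht x v' hv') (abs_nonneg _)
    have step3 : (∫ x in I, (Cφ * Real.exp (4*CK*t)) * |grem t x v|)
        = (Cφ * Real.exp (4*CK*t)) * ∫ x in I, |grem t x v| := by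
      exact integral_const_mul _ _
    have step4 : (∫ x in I, |grem t x v|) ≤ ∫ x : ℝ, |grem t x v| :=
      setIntegral_le_integral (hgrem_int t ht v hv).abs (ae_of_all _ fun x => abs_nonneg _)
    calc |F t| ≤ ∫ x in I, |f t x v'| * |grem t x v| := step1
      _ ≤ ∫ x in I, (Cφ * Real.exp (4*CK*t)) * |grem t x v| := step2
      _ = (Cφ * Real.exp (4*CK*t)) * ∫ x in I, |grem t x v| := step3
      _ ≤ (Cφ * Real.exp (4*CK*t)) * ∫ x : ℝ, |grem t x v| :=
          mul_le_mul_of_nonneg_left step4 (by positivity)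
  obtain ⟨Cr2, hCr2⟩ : ∃ C : ℝ, ∀ t ∈ Icc (0:ℝ) T, ∀ w ∈ ({1,-1} : Set ℝ),
      (∫ x : ℝ, |grem t x w|) ≤ C := ⟨Cr, hCr⟩
  have hH : ∀ t ∈ Icc (0:ℝ) T, |F t| ≤ Cφ * Real.exp (4*CK*t)
      * (2*Cμ*A^N*(Real.exp (2*CK*(T-t))^2 - Real.exp (2*CK*(T-t)))) := by
    intro t ht
    refine le_trans (habs_step t ht) ?_
    exact mul_le_mul_of_nonneg_left (hbrem t ht v hv) (by positivity)
  have hF_int : IntervalIntegrable F volume 0 T := by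
    apply intint_of_bdd (M := (Cφ * Real.exp (4*CK*T)) * Cr2) hT.le hF_meas
    intro t ht
    refine le_trans (habs_step t ht) ?_
    have h1 : Real.exp (4*CK*t) ≤ Real.exp (4*CK*T) := Real.exp_le_exp.2 (by nlinarith [ht.2])
    have h2 := hCr2 t ht v hv
    have h3 : (0:ℝ) ≤ ∫ x : ℝ, |grem t x v| := integral_nonneg fun x => abs_nonneg _
    have hCr2nn : 0 ≤ Cr2 := le_trans h3 h2
    calc (Cφ * Real.exp (4*CK*t)) * (∫ x : ℝ, |grem t x v|)
        ≤ (Cφ * Real.exp (4*CK*t)) * Cr2 := mul_le_mul_of_nonneg_left h2 (by positivity)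
      _ ≤ (Cφ * Real.exp (4*CK*T)) * Cr2 :=
          mul_le_mul_of_nonneg_right (mul_le_mul_of_nonneg_left h1 hCφ) hCr2nn
  -- assemble
  have hstep5 : |∫ t in (0:ℝ)..T, F t| ≤ ∫ t in (0:ℝ)..T, |F t| :=
    intervalIntegral.abs_integral_le_integral_abs hT.le
  set X : ℝ := Real.exp (2*CK*T) with hX_def
  have hX1 : 1 ≤ X := Real.one_le_exp (by positivity)
  have hX0 : 0 < X := lt_of_lt_of_le one_pos hX1
  have hHcong : (fun t => Cφ * Real.exp (4*CK*t)
      * (2*Cμ*A^N*(Real.exp (2*CK*(T-t))^2 - Real.exp (2*CK*(T-t)))))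
      = fun t => (2*Cφ*Cμ*A^N*X^2) - (2*Cφ*Cμ*A^N*X) * Real.exp (2*CK*t) := by
    funext t
    have e1 : Real.exp (4*CK*t) * Real.exp (2*CK*(T-t))^2 = X^2 := by
      rw [hX_def, sq, sq, ← Real.exp_add, ← Real.exp_add, ← Real.exp_add]
      congr 1; ring
    have e2 : Real.exp (4*CK*t) * Real.exp (2*CK*(T-t)) = X * Real.exp (2*CK*t) := by
      rw [hX_def, ← Real.exp_add, ← Real.exp_add]
      congr 1; ring
    linear_combination (2*Cφ*Cμ*A^N) * e1 - (2*Cφ*Cμ*A^N) * e2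
  have hstep6 : (∫ t in (0:ℝ)..T, |F t|) ≤ ∫ t in (0:ℝ)..T,
      (Cφ * Real.exp (4*CK*t)
        * (2*Cμ*A^N*(Real.exp (2*CK*(T-t))^2 - Real.exp (2*CK*(T-t))))) := by
    refine intervalIntegral.integral_mono_on hT.le hF_int.abs
      ((by fun_prop : Continuous fun t => Cφ * Real.exp (4*CK*t)
        * (2*Cμ*A^N*(Real.exp (2*CK*(T-t))^2 - Real.exp (2*CK*(T-t))))).intervalIntegrable 0 T)
      (fun t ht => hH t ht)
  have hHint : (∫ t in (0:ℝ)..T,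
      (Cφ * Real.exp (4*CK*t)
        * (2*Cμ*A^N*(Real.exp (2*CK*(T-t))^2 - Real.exp (2*CK*(T-t))))))
      = (2*Cφ*Cμ*A^N*X^2)*T - (2*Cφ*Cμ*A^N*X) * ((X - 1)/(2*CK)) := by
    rw [hHcong, intervalIntegral.integral_sub (intervalIntegrable_const)
      (((by fun_prop : Continuous fun t : ℝ =>
        (2*Cφ*Cμ*A^N*X) * Real.exp (2*CK*t))).intervalIntegrable 0 T),
      intervalIntegral.integral_const, intervalIntegral.integral_const_mul,
      myint_exp (by positivity : (2*CK) ≠ 0) 0 T]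
    rw [hX_def]
    simp [Real.exp_zero]
    ring
  -- the final numeric inequality
  have hP : 0 ≤ Cφ*Cμ*A^N := by positivity
  have hX2 := key_exp_ineq (show (0:ℝ) ≤ 2*CK*T by positivity)
  rw [show Real.exp (2*CK*T) = X from rfl] at hX2
  have hkey2 : (2*CK*T)*X^2 - X^2 + X ≤ X^2*(2*CK*T)^2/2 := by
    nlinarith [mul_le_mul_of_nonneg_left hX2 (le_of_lt (half_pos hX0)), hX0]
  have e4 : Real.exp (4*CK*T) = X^2 := by
    rw [hX_def, sq, ← Real.exp_add]; congr 1; ring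
  have hfinal : (2*Cφ*Cμ*A^N*X^2)*T - (2*Cφ*Cμ*A^N*X) * ((X - 1)/(2*CK))
      ≤ 2 * T ^ 2 * CK * Cφ * Real.exp (4 * CK * T) * A ^ N * Cμ := by
    rw [e4]
    have expand : (2*Cφ*Cμ*A^N*X^2)*T - (2*Cφ*Cμ*A^N*X) * ((X - 1)/(2*CK))
        = (Cφ*Cμ*A^N/CK) * ((2*CK*T)*X^2 - X^2 + X) := by
      field_simp; ring
    have expand2 : 2 * T ^ 2 * CK * Cφ * X^2 * A ^ N * Cμ
        = (Cφ*Cμ*A^N/CK) * (X^2*(2*CK*T)^2/2) := by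
      field_simp
    rw [expand, expand2]
    exact mul_le_mul_of_nonneg_left hkey2 (div_nonneg hP hCK.le)
  calc |∫ t in (0:ℝ)..T, ∫ x in I, f t x v' * grem t x v|
      = |∫ t in (0:ℝ)..T, F t| := rfl
    _ ≤ ∫ t in (0:ℝ)..T, |F t| := hstep5
    _ ≤ ∫ t in (0:ℝ)..T, (Cφ * Real.exp (4*CK*t)
        * (2*Cμ*A^N*(Real.exp (2*CK*(T-t))^2 - Real.exp (2*CK*(T-t))))) := hstep6
    _ = (2*Cφ*Cμ*A^N*X^2)*T - (2*Cφ*Cμ*A^N*X) * ((X - 1)/(2*CK)) := hHint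
    _ ≤ 2 * T ^ 2 * CK * Cφ * Real.exp (4 * CK * T) * A ^ N * Cμ := hfinal
end
end

section
/- Finite speed of propagation: let K be measurable with 0 ≤ K ≤ C_K. (i) If φ is bounded measurable with φ(x,v) = 0 for all v ∈ V whenever x ∉ [c−d, c+d], and f is a bounded measurable mild solution of the homogeneous kinetic equation with initial datum φ, then f(t,x,v) = 0 for all t ∈ [0,T], v ∈ V and x ∉ [c−d−t, c+d+t]. (ii) If ψ is bounded measurable with ψ(x,v) = 0 for all v whenever x ∉ [c−d, c+d], and g is a bounded measurable mild solution of the adjoint kinetic equation −∂_t g − v ∂_x g = L̃(g) − σ g with final datum ψ, then g(t,x,v) = 0 for all t ∈ [0,T], v ∈ V and x ∉ [c−d−(T−t), c+d+(T−t)]. -/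
open MeasureTheory Real Set Filter

noncomputable section

lemma geom_aux {c d t s e x : ℝ} (he : e = 1 ∨ e = -1) (hs : 0 ≤ s) (hst : s ≤ t)
    (hx : x ∉ Set.Icc (c - d - t) (c + d + t)) :
    x - e * (t - s) ∉ Set.Icc (c - d - s) (c + d + s) := by
  rw [Set.mem_Icc, not_and_or, not_le, not_le] at hx ⊢
  rcases hx with hx | hx
  · left; rcases he with rfl | rfl <;> linarith
  · right; rcases he with rfl | rfl <;> linarith

lemma tri_aux (a b c : ℝ) : |a + b - c| ≤ |a| + |b| + |c| := by
  have h := abs_add_le (a + b) (-c)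
  rw [abs_neg] at h
  have h2 : |a + b| + |c| ≤ |a| + |b| + |c| := add_le_add_left (abs_add_le a b) _
  calc |a + b - c| = |a + b + -c| := by ring_nf
    _ ≤ |a + b| + |c| := h
    _ ≤ |a| + |b| + |c| := h2

lemma mul_abs_aux {A CK z : ℝ} (h0 : 0 ≤ A) (h1 : A ≤ CK) : |A * z| ≤ CK * |z| := by
  rw [abs_mul, abs_of_nonneg h0]
  exact mul_le_mul_of_nonneg_right h1 (abs_nonneg _)

lemma vanish_aux (T a C c d : ℝ) (ha : 0 < a) (hC : 0 ≤ C)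
    (u : ℝ → ℝ → ℝ → ℝ)
    (hbdd : ∀ t x v, |u t x v| ≤ C)
    (hdu : ∀ t ∈ Set.Icc (0:ℝ) T, ∀ v ∈ ({1, -1} : Set ℝ),
      ∀ x ∉ Set.Icc (c - d - t) (c + d + t),
      ∃ y H : ℝ → ℝ,
        u t x v = ∫ s in (0:ℝ)..t, H s ∧
        ∀ s ∈ Set.Icc (0:ℝ) t, y s ∉ Set.Icc (c - d - s) (c + d + s) ∧
          |H s| ≤ a * (|u s (y s) 1| + |u s (y s) (-1)|)) :
    ∀ t ∈ Set.Icc (0:ℝ) T, ∀ v ∈ ({1, -1} : Set ℝ),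
      ∀ x ∉ Set.Icc (c - d - t) (c + d + t), u t x v = 0 := by
  set δ : ℝ := 1 / (4 * a) with hδdef
  have hδ : 0 < δ := by positivity
  have main : ∀ m : ℕ, ∀ t ∈ Set.Icc (0:ℝ) T, t ≤ (m : ℝ) * δ →
      ∀ v ∈ ({1, -1} : Set ℝ), ∀ x ∉ Set.Icc (c - d - t) (c + d + t), u t x v = 0 := by
    intro m
    induction m with
    | zero =>
      intro t ht ht0 v hv x hx
      have ht00 : t = 0 := le_antisymm (by simpa using ht0) ht.1
      subst ht00
      obtain ⟨y, H, heq, -⟩ := hdu 0 ht v hv x hx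
      rw [heq, intervalIntegral.integral_same]
    | succ m ih =>
      have inner : ∀ n : ℕ, ∀ t ∈ Set.Icc (0:ℝ) T, t ≤ ((m : ℝ) + 1) * δ →
          ∀ v ∈ ({1, -1} : Set ℝ), ∀ x ∉ Set.Icc (c - d - t) (c + d + t),
          |u t x v| ≤ C / 2 ^ n := by
        intro n
        induction n with
        | zero => intro t _ _ v _ x _; simpa using hbdd t x v
        | succ n ihn =>
          intro t ht htm v hv x hx
          by_cases hcase : t ≤ (m : ℝ) * δ
          · rw [ih t ht hcase v hv x hx]; simp; positivity
          push_neg at hcase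
          obtain ⟨y, H, heq, hH⟩ := hdu t ht v hv x hx
          have hmδ0 : (0:ℝ) ≤ (m : ℝ) * δ := by positivity
          have hmδt : (m : ℝ) * δ ≤ t := hcase.le
          have hH0 : ∀ s ∈ Set.Icc (0:ℝ) ((m : ℝ) * δ), H s = 0 := by
            intro s hs
            have hst : s ∈ Set.Icc (0:ℝ) t := ⟨hs.1, hs.2.trans hmδt⟩
            obtain ⟨hy, hb⟩ := hH s hst
            have hsT : s ∈ Set.Icc (0:ℝ) T := ⟨hs.1, hst.2.trans ht.2⟩
            have h1 : u s (y s) 1 = 0 := ih s hsT hs.2 1 (by simp) (y s) hy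
            have h2 : u s (y s) (-1) = 0 := ih s hsT hs.2 (-1) (by simp) (y s) hy
            rw [h1, h2] at hb
            simp only [abs_zero, add_zero, mul_zero] at hb
            exact abs_eq_zero.mp (le_antisymm hb (abs_nonneg _))
          have hsplit : (∫ s in (0:ℝ)..t, H s) = ∫ s in ((m : ℝ) * δ)..t, H s := by
            by_cases hint : IntervalIntegrable H volume ((m : ℝ) * δ) t
            · have h1 : IntervalIntegrable H volume 0 ((m : ℝ) * δ) := by
                rw [intervalIntegrable_iff]
                refine (integrableOn_congr_fun ?_ measurableSet_uIoc).mpr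
                  integrableOn_zero
                intro s hs
                rw [Set.uIoc_of_le hmδ0] at hs
                exact hH0 s ⟨hs.1.le, hs.2⟩
              have h0 : (∫ s in (0:ℝ)..((m : ℝ) * δ), H s) = 0 := by
                have he : Set.EqOn H (fun _ => (0:ℝ)) (Set.uIcc 0 ((m : ℝ) * δ)) := by
                  intro s hs
                  rw [Set.uIcc_of_le hmδ0] at hs
                  exact hH0 s hs
                rw [intervalIntegral.integral_congr he]
                simp
              have hadd := intervalIntegral.integral_add_adjacent_intervals h1 hint
              rw [← hadd, h0, zero_add]
            · have hint2 : ¬ IntervalIntegrable H volume 0 t := by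
                intro hI
                exact hint (hI.mono_set (by
                  rw [Set.uIcc_of_le (hmδ0.trans hmδt), Set.uIcc_of_le hmδt]
                  exact Set.Icc_subset_Icc hmδ0 le_rfl))
              rw [intervalIntegral.integral_undef hint, intervalIntegral.integral_undef hint2]
          have hb2 : |∫ s in ((m : ℝ) * δ)..t, H s| ≤ (a * (C / 2 ^ n + C / 2 ^ n)) * |t - (m : ℝ) * δ| := by
            rw [← Real.norm_eq_abs (∫ s in ((m : ℝ) * δ)..t, H s)]
            apply intervalIntegral.norm_integral_le_of_norm_le_const
            intro s hs
            rw [Set.uIoc_of_le hmδt] at hs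
            have hs0 : 0 ≤ s := hmδ0.trans hs.1.le
            have hst : s ∈ Set.Icc (0:ℝ) t := ⟨hs0, hs.2⟩
            obtain ⟨hy, hbnd⟩ := hH s hst
            have hsT : s ∈ Set.Icc (0:ℝ) T := ⟨hs0, hs.2.trans ht.2⟩
            have h1 := ihn s hsT (hs.2.trans htm) 1 (by simp) (y s) hy
            have h2 := ihn s hsT (hs.2.trans htm) (-1) (by simp) (y s) hy
            rw [Real.norm_eq_abs]
            calc |H s| ≤ a * (|u s (y s) 1| + |u s (y s) (-1)|) := hbnd
              _ ≤ a * (C / 2 ^ n + C / 2 ^ n) := by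
                  apply mul_le_mul_of_nonneg_left (add_le_add h1 h2) ha.le
          have habs : |t - (m : ℝ) * δ| ≤ δ := by
            rw [abs_of_nonneg (by linarith)]
            linarith
          have hfin : |u t x v| ≤ C / 2 ^ (n + 1) := by
            rw [heq, hsplit]
            refine hb2.trans ?_
            have h4 : (a * (C / 2 ^ n + C / 2 ^ n)) * |t - (m : ℝ) * δ|
                ≤ (a * (C / 2 ^ n + C / 2 ^ n)) * δ := by
              apply mul_le_mul_of_nonneg_left habs (by positivity)
            refine h4.trans (le_of_eq ?_)
            rw [hδdef]
            field_simp
            ring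
          exact hfin
      intro t ht htm v hv x hx
      have htm' : t ≤ ((m : ℝ) + 1) * δ := by push_cast at htm; linarith
      have hn : ∀ n : ℕ, |u t x v| ≤ C / 2 ^ n := fun n => inner n t ht htm' v hv x hx
      have hlim : Tendsto (fun n : ℕ => C / 2 ^ n) atTop (nhds 0) := by
        have h12 : Tendsto (fun n : ℕ => ((1:ℝ)/2) ^ n) atTop (nhds 0) :=
          tendsto_pow_atTop_nhds_zero_of_lt_one (by norm_num) (by norm_num)
        have := h12.const_mul C
        rw [mul_zero] at this
        convert this using 2 with n
        rw [div_pow, one_pow, mul_one_div]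
      have h0 : |u t x v| ≤ 0 := ge_of_tendsto hlim (Filter.Eventually.of_forall hn)
      exact abs_eq_zero.mp (le_antisymm h0 (abs_nonneg _))
  intro t ht v hv x hx
  obtain ⟨m, hm⟩ := exists_nat_ge (T / δ)
  refine main m t ht ?_ v hv x hx
  have hTm : T ≤ (m : ℝ) * δ := (div_le_iff₀ hδ).mp hm
  exact ht.2.trans hTm

lemma comp_sub_aux (F : ℝ → ℝ) (T τ : ℝ) :
    (∫ s in (T - τ)..T, F s) = ∫ r in (0:ℝ)..τ, F (T - r) := by
  have h := intervalIntegral.integral_comp_sub_left (a := 0) (b := τ) F T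
  simpa using h.symm

/-- finite speed of propagation (speed `|v| = 1`): (i) if the initial datum
`φ` vanishes outside `[c−d, c+d]`, then the forward mild solution `f(t,·,·)` vanishes
outside `[c−d−t, c+d+t]`; (ii) if the final datum `ψ` vanishes outside `[c−d, c+d]`, then
the adjoint mild solution `g(t,·,·)` vanishes outside `[c−d−(T−t), c+d+(T−t)]`. -/
theorem finite_speed_of_propagation
    (T CK c d : ℝ) (hT : 0 < T) (hCK : 0 < CK) (hd : 0 < d)
    (K : ℝ → ℝ → ℝ → ℝ)
    (hK_nonneg : ∀ x v v', 0 ≤ K x v v') (hK_bdd : ∀ x v v', K x v v' ≤ CK)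
    (φ : ℝ → ℝ → ℝ)
    (hφ_meas : Measurable fun p : ℝ × ℝ => φ p.1 p.2)
    (hφ_bdd : ∃ C, ∀ x v, |φ x v| ≤ C)
    (hφ_supp : ∀ x : ℝ, x ∉ Set.Icc (c - d) (c + d) → ∀ v, φ x v = 0)
    (f : ℝ → ℝ → ℝ → ℝ) (hf : IsMildF T K φ (fun _ _ _ => 0) f)
    (ψ : ℝ → ℝ → ℝ)
    (hψ_meas : Measurable fun p : ℝ × ℝ => ψ p.1 p.2)
    (hψ_bdd : ∃ C, ∀ x v, |ψ x v| ≤ C)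
    (hψ_supp : ∀ x : ℝ, x ∉ Set.Icc (c - d) (c + d) → ∀ v, ψ x v = 0)
    (g : ℝ → ℝ → ℝ → ℝ) (hg : IsMildGb T K 1 ψ (fun _ _ _ => 0) g) :
    (∀ t ∈ Set.Icc (0 : ℝ) T, ∀ v ∈ ({1, -1} : Set ℝ), ∀ x : ℝ,
      x ∉ Set.Icc (c - d - t) (c + d + t) → f t x v = 0) ∧
    (∀ t ∈ Set.Icc (0 : ℝ) T, ∀ v ∈ ({1, -1} : Set ℝ), ∀ x : ℝ,
      x ∉ Set.Icc (c - d - (T - t)) (c + d + (T - t)) → g t x v = 0) := by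
  obtain ⟨-, ⟨C₀, hfC⟩, hfeq⟩ := hf
  obtain ⟨-, ⟨C₁, hgC⟩, hgeq⟩ := hg
  constructor
  · -- forward part
    have hbdd : ∀ t x v, |f t x v| ≤ max C₀ 0 :=
      fun t x v => (hfC t x v).trans (le_max_left _ _)
    refine vanish_aux T (3 * CK) (max C₀ 0) c d (by positivity) (le_max_right _ _) f hbdd ?_
    intro t ht v hv x hx
    have hv' : v = 1 ∨ v = -1 := by simpa using hv
    have heq := hfeq t ht x v hv
    simp only [add_zero] at heq
    refine ⟨fun s => x - v * (t - s),
      fun s => K (x - v * (t - s)) v 1 * f s (x - v * (t - s)) 1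
        + K (x - v * (t - s)) v (-1) * f s (x - v * (t - s)) (-1)
        - (K (x - v * (t - s)) 1 v + K (x - v * (t - s)) (-1) v)
            * f s (x - v * (t - s)) v, ?_, ?_⟩
    · rw [heq]
      have hout : x - v * t ∉ Set.Icc (c - d) (c + d) := by
        have h8 := geom_aux hv' le_rfl ht.1 hx
        simpa using h8
      rw [hφ_supp _ hout v, zero_add]
    · intro s hs
      refine ⟨geom_aux hv' hs.1 hs.2 hx, ?_⟩
      set z := x - v * (t - s) with hz
      have e1 : |K z v 1 * f s z 1| ≤ CK * |f s z 1| :=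
        mul_abs_aux (hK_nonneg _ _ _) (hK_bdd _ _ _)
      have e2 : |K z v (-1) * f s z (-1)| ≤ CK * |f s z (-1)| :=
        mul_abs_aux (hK_nonneg _ _ _) (hK_bdd _ _ _)
      have e3 : |(K z 1 v + K z (-1) v) * f s z v| ≤ (2 * CK) * |f s z v| :=
        mul_abs_aux (add_nonneg (hK_nonneg _ _ _) (hK_nonneg _ _ _))
          (by linarith [hK_bdd z 1 v, hK_bdd z (-1) v])
      have e4 : |f s z v| ≤ |f s z 1| + |f s z (-1)| := by
        rcases hv' with rfl | rfl
        · linarith [abs_nonneg (f s z (-1))]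
        · linarith [abs_nonneg (f s z 1)]
      have e5 : (2 * CK) * |f s z v| ≤ (2 * CK) * (|f s z 1| + |f s z (-1)|) :=
        mul_le_mul_of_nonneg_left e4 (by positivity)
      calc |K z v 1 * f s z 1 + K z v (-1) * f s z (-1)
            - (K z 1 v + K z (-1) v) * f s z v|
          ≤ |K z v 1 * f s z 1| + |K z v (-1) * f s z (-1)|
            + |(K z 1 v + K z (-1) v) * f s z v| := tri_aux _ _ _
        _ ≤ CK * |f s z 1| + CK * |f s z (-1)|
            + (2 * CK) * (|f s z 1| + |f s z (-1)|) := by linarith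
        _ ≤ 3 * CK * (|f s z 1| + |f s z (-1)|) := le_of_eq (by ring)
  · -- backward part
    have hbdd : ∀ τ x v, |(fun τ x v => g (T - τ) x v) τ x v| ≤ max C₁ 0 :=
      fun τ x v => (hgC _ x v).trans (le_max_left _ _)
    have hdu2 : ∀ τ ∈ Set.Icc (0:ℝ) T, ∀ v ∈ ({1, -1} : Set ℝ),
        ∀ x ∉ Set.Icc (c - d - τ) (c + d + τ),
        ∃ y H : ℝ → ℝ,
          g (T - τ) x v = ∫ s in (0:ℝ)..τ, H s ∧
          ∀ s ∈ Set.Icc (0:ℝ) τ, y s ∉ Set.Icc (c - d - s) (c + d + s) ∧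
            |H s| ≤ (3 * CK) * (|g (T - s) (y s) 1| + |g (T - s) (y s) (-1)|) := by
      intro τ hτ v hv x hx
      have hv' : v = 1 ∨ v = -1 := by simpa using hv
      have he0 : -v = 1 ∨ -v = -1 := by
        rcases hv' with rfl | rfl
        · right; norm_num
        · left; norm_num
      have htmem : T - τ ∈ Set.Icc (0:ℝ) T := ⟨by linarith [hτ.2], by linarith [hτ.1]⟩
      have heq := hgeq (T - τ) htmem x v hv
      simp only [one_mul, add_zero, sub_sub_cancel] at heq
      have hout : x + v * τ ∉ Set.Icc (c - d) (c + d) := by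
        have h8 := geom_aux he0 le_rfl hτ.1 hx
        have h9 : x - -v * (τ - 0) = x + v * τ := by ring
        rw [h9] at h8
        simpa using h8
      refine ⟨fun r => x + v * (T - r - (T - τ)),
        fun r => K (x + v * (T - r - (T - τ))) 1 v * g (T - r) (x + v * (T - r - (T - τ))) 1
          + K (x + v * (T - r - (T - τ))) (-1) v * g (T - r) (x + v * (T - r - (T - τ))) (-1)
          - (K (x + v * (T - r - (T - τ))) 1 v + K (x + v * (T - r - (T - τ))) (-1) v)
              * g (T - r) (x + v * (T - r - (T - τ))) v, ?_, ?_⟩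
      · rw [heq, hψ_supp _ hout v, zero_add,
          comp_sub_aux (fun s => K (x + v * (s - (T - τ))) 1 v * g s (x + v * (s - (T - τ))) 1
            + K (x + v * (s - (T - τ))) (-1) v * g s (x + v * (s - (T - τ))) (-1)
            - (K (x + v * (s - (T - τ))) 1 v + K (x + v * (s - (T - τ))) (-1) v)
                * g s (x + v * (s - (T - τ))) v) T τ]
      · intro r hr
        have hy9 : x + v * (T - r - (T - τ)) = x - -v * (τ - r) := by ring
        constructor
        · show x + v * (T - r - (T - τ)) ∉ Set.Icc (c - d - r) (c + d + r)
          rw [hy9]; exact geom_aux he0 hr.1 hr.2 hx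
        · set z := x + v * (T - r - (T - τ)) with hzdef
          have e1 : |K z 1 v * g (T - r) z 1| ≤ CK * |g (T - r) z 1| :=
            mul_abs_aux (hK_nonneg _ _ _) (hK_bdd _ _ _)
          have e2 : |K z (-1) v * g (T - r) z (-1)| ≤ CK * |g (T - r) z (-1)| :=
            mul_abs_aux (hK_nonneg _ _ _) (hK_bdd _ _ _)
          have e3 : |(K z 1 v + K z (-1) v) * g (T - r) z v| ≤ (2 * CK) * |g (T - r) z v| :=
            mul_abs_aux (add_nonneg (hK_nonneg _ _ _) (hK_nonneg _ _ _))
              (by linarith [hK_bdd z 1 v, hK_bdd z (-1) v])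
          have e4 : |g (T - r) z v| ≤ |g (T - r) z 1| + |g (T - r) z (-1)| := by
            rcases hv' with rfl | rfl
            · linarith [abs_nonneg (g (T - r) z (-1))]
            · linarith [abs_nonneg (g (T - r) z 1)]
          have e5 : (2 * CK) * |g (T - r) z v|
              ≤ (2 * CK) * (|g (T - r) z 1| + |g (T - r) z (-1)|) :=
            mul_le_mul_of_nonneg_left e4 (by positivity)
          calc |K z 1 v * g (T - r) z 1 + K z (-1) v * g (T - r) z (-1)
                - (K z 1 v + K z (-1) v) * g (T - r) z v|
              ≤ |K z 1 v * g (T - r) z 1| + |K z (-1) v * g (T - r) z (-1)|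
                + |(K z 1 v + K z (-1) v) * g (T - r) z v| := tri_aux _ _ _
            _ ≤ CK * |g (T - r) z 1| + CK * |g (T - r) z (-1)|
                + (2 * CK) * (|g (T - r) z 1| + |g (T - r) z (-1)|) := by linarith
            _ ≤ 3 * CK * (|g (T - r) z 1| + |g (T - r) z (-1)|) := le_of_eq (by ring)
    have key := vanish_aux T (3 * CK) (max C₁ 0) c d (by positivity) (le_max_right _ _)
      (fun τ x v => g (T - τ) x v) hbdd hdu2
    intro t ht v hv x hx
    have htmem : T - t ∈ Set.Icc (0:ℝ) T := ⟨by linarith [ht.2], by linarith [ht.1]⟩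
    have h := key (T - t) htmem v hv x hx
    simpa [sub_sub_cancel] using h
end
end

section
/- Decoupling under Design (D): let the interval [a₀, a_R) be divided into I_r = [a_{r−1}, a_r) with centers a_{r−1/2} = (a_{r−1}+a_r)/2, let 0 < d < min_r (a_r − a_{r−1})/4, 0 < d_μ ≤ d, and 0 < T < min_r ((a_r − a_{r−1})/4 − d/2). Let K be measurable with 0 ≤ K ≤ C_K. For each r, let φ_r be a bounded nonnegative measurable initial datum with φ_r(x,v) = 0 for all v whenever x ∉ a_{r−1/2} + [−d, d], let f_r be a bounded measurable mild solution of the homogeneous kinetic equation with initial datum φ_r, and let g_{r,i} (i = 1,2) be a bounded measurable mild solution of the adjoint kinetic equation with final datum equal to a scalar multiple of μ_{r,i} = C̄_μ 1_{[(−1)^i T − d_μ, (−1)^i T + d_μ] + a_{r−1/2}}. Then for all t ∈ [0,T] and v ∈ V, f_r(t,·,v) and g_{r,i}(t,·,v) vanish outside I_r; consequently, for every s ≠ r and all v, v' ∈ V: ∫₀^T ∫_{I_s} f_r(t,x,v') (g_{r,i}(t,x,v') − g_{r,i}(t,x,v)) dx dt = 0, so the adjoint-represented gradient entries of the measurement associated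 with interval I_r with respect to the kernel values on I_s vanish, and the Hessian of the loss is block diagonal with 2×2 blocks. -/
open MeasureTheory Real Set Filter

noncomputable section

private lemma eq_zero_of_abs_le_seq (z C A w : ℝ)
    (h : ∀ n : ℕ, |z| ≤ C * (A ^ n * w ^ n / (Nat.factorial n : ℝ))) : z = 0 := by
  have h1 : Tendsto (fun n : ℕ => C * ((A * w) ^ n / (Nat.factorial n : ℝ)))
      atTop (nhds 0) := by
    simpa using ((Real.summable_pow_div_factorial (A * w)).tendsto_atTop_zero).const_mul C
  have h2 : |z| ≤ 0 := ge_of_tendsto h1 (Eventually.of_forall fun n => by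
    calc |z| ≤ C * (A ^ n * w ^ n / (Nat.factorial n : ℝ)) := h n
      _ = C * ((A * w) ^ n / (Nat.factorial n : ℝ)) := by rw [mul_pow])
  exact abs_eq_zero.mp (le_antisymm h2 (abs_nonneg z))

private lemma gronwall_cone (T C A : ℝ)
    (u : ℝ → ℝ → ℝ → ℝ) (Out : ℝ → ℝ → Prop) (w : ℝ → ℝ)
    (hbase : ∀ t ∈ Set.Icc (0:ℝ) T, ∀ v ∈ ({1,-1} : Set ℝ), ∀ x, Out t x → |u t x v| ≤ C)
    (hstep : ∀ n : ℕ,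
      (∀ s ∈ Set.Icc (0:ℝ) T, ∀ v ∈ ({1,-1} : Set ℝ), ∀ y, Out s y →
        |u s y v| ≤ C * (A ^ n * (w s) ^ n / (Nat.factorial n : ℝ))) →
      ∀ t ∈ Set.Icc (0:ℝ) T, ∀ v ∈ ({1,-1} : Set ℝ), ∀ x, Out t x →
        |u t x v| ≤ C * (A ^ (n+1) * (w t) ^ (n+1) / (Nat.factorial (n+1) : ℝ))) :
    ∀ t ∈ Set.Icc (0:ℝ) T, ∀ v ∈ ({1,-1} : Set ℝ), ∀ x, Out t x → u t x v = 0 := by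
  have key : ∀ n : ℕ, ∀ t ∈ Set.Icc (0:ℝ) T, ∀ v ∈ ({1,-1} : Set ℝ), ∀ x, Out t x →
      |u t x v| ≤ C * (A ^ n * (w t) ^ n / (Nat.factorial n : ℝ)) := by
    intro n
    induction n with
    | zero => intro t ht v hv x hx; simpa [Nat.factorial] using hbase t ht v hv x hx
    | succ n ih => exact hstep n ih
  intro t ht v hv x hx
  exact eq_zero_of_abs_le_seq _ C A (w t) (fun n => key n t ht v hv x hx)

private lemma aux_forward_support
    (T CK d : ℝ) (c : ℝ)
    (hT : 0 < T) (hCK : 0 < CK) (hd : 0 < d)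
    (K : ℝ → ℝ → ℝ → ℝ)
    (hK_nonneg : ∀ x v v', 0 ≤ K x v v') (hK_bdd : ∀ x v v', K x v v' ≤ CK)
    (φr : ℝ → ℝ → ℝ)
    (hφ_supp : ∀ x : ℝ, x ∉ Set.Icc (c - d) (c + d) → ∀ v, φr x v = 0)
    (fr : ℝ → ℝ → ℝ → ℝ)
    (C0 : ℝ) (hC0 : ∀ t x v, |fr t x v| ≤ C0)
    (hf_eq : ∀ t ∈ Set.Icc (0 : ℝ) T, ∀ x : ℝ, ∀ v ∈ ({1, -1} : Set ℝ),
      fr t x v = φr (x - v * t) v +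
        ∫ s in (0 : ℝ)..t,
          (K (x - v * (t - s)) v 1 * fr s (x - v * (t - s)) 1
            + K (x - v * (t - s)) v (-1) * fr s (x - v * (t - s)) (-1)
            - (K (x - v * (t - s)) 1 v + K (x - v * (t - s)) (-1) v)
                * fr s (x - v * (t - s)) v
            + (fun _ _ _ => (0:ℝ)) s (x - v * (t - s)) v)) :
    ∀ t ∈ Set.Icc (0:ℝ) T, ∀ v ∈ ({1,-1} : Set ℝ), ∀ x,
      (x < c - d - t ∨ c + d + t < x) → fr t x v = 0 := by
  have hCK0 : (0:ℝ) ≤ CK := hCK.le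
  have hCf0 : (0:ℝ) ≤ max C0 0 := le_max_right _ _
  have hvabs : ∀ v ∈ ({1,-1} : Set ℝ), ∀ τ : ℝ, 0 ≤ τ → -τ ≤ v * τ ∧ v * τ ≤ τ := by
    intro v hv τ hτ
    have hv' : v = 1 ∨ v = -1 := by simpa using hv
    rcases hv' with rfl | rfl
    · constructor <;> linarith
    · constructor <;> linarith
  refine gronwall_cone T (max C0 0) (4*CK) fr
      (fun t x => x < c - d - t ∨ c + d + t < x) (fun t => t)
      (fun t _ v _ x _ => (hC0 t x v).trans (le_max_left _ _)) ?_
  intro n ih t ht v hv x hx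
  have ht0 : (0:ℝ) ≤ t := ht.1
  have hvb := hvabs v hv
  have heq := hf_eq t ht x v hv
  simp only [add_zero] at heq
  have hφ0 : φr (x - v * t) v = 0 := by
    apply hφ_supp
    intro hmem
    obtain ⟨hm1, hm2⟩ := hmem
    have hvt := hvb t ht0
    rcases hx with hx | hx
    · linarith [hvt.1, hvt.2]
    · linarith [hvt.1, hvt.2]
  have hbound : ∀ s ∈ Set.uIoc (0:ℝ) t,
      ‖(K (x - v * (t - s)) v 1 * fr s (x - v * (t - s)) 1
        + K (x - v * (t - s)) v (-1) * fr s (x - v * (t - s)) (-1)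
        - (K (x - v * (t - s)) 1 v + K (x - v * (t - s)) (-1) v)
            * fr s (x - v * (t - s)) v)‖
        ≤ 4 * CK * (max C0 0 * ((4*CK) ^ n * s ^ n / (Nat.factorial n : ℝ))) := by
    intro s hs
    rw [Set.uIoc_of_le ht0] at hs
    have hsIcc : s ∈ Set.Icc (0:ℝ) T := ⟨hs.1.le, hs.2.trans ht.2⟩
    set y := x - v * (t - s) with hy
    have houty : y < c - d - s ∨ c + d + s < y := by
      have hvt := hvb (t - s) (by linarith [hs.2])
      rcases hx with hx | hx
      · left; rw [hy]; linarith [hvt.1, hvt.2]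
      · right; rw [hy]; linarith [hvt.1, hvt.2]
    have b1 : |fr s y 1| ≤ max C0 0 * ((4*CK) ^ n * s ^ n / (Nat.factorial n : ℝ)) :=
      ih s hsIcc 1 (by simp) y houty
    have b2 : |fr s y (-1)| ≤ max C0 0 * ((4*CK) ^ n * s ^ n / (Nat.factorial n : ℝ)) :=
      ih s hsIcc (-1) (by simp) y houty
    have bv : |fr s y v| ≤ max C0 0 * ((4*CK) ^ n * s ^ n / (Nat.factorial n : ℝ)) :=
      ih s hsIcc v hv y houty
    have e1 : |K y v 1 * fr s y 1|
        ≤ CK * (max C0 0 * ((4*CK) ^ n * s ^ n / (Nat.factorial n : ℝ))) := by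
      rw [abs_mul, abs_of_nonneg (hK_nonneg _ _ _)]
      exact mul_le_mul (hK_bdd _ _ _) b1 (abs_nonneg _) hCK0
    have e2 : |K y v (-1) * fr s y (-1)|
        ≤ CK * (max C0 0 * ((4*CK) ^ n * s ^ n / (Nat.factorial n : ℝ))) := by
      rw [abs_mul, abs_of_nonneg (hK_nonneg _ _ _)]
      exact mul_le_mul (hK_bdd _ _ _) b2 (abs_nonneg _) hCK0
    have e3 : |(K y 1 v + K y (-1) v) * fr s y v|
        ≤ (CK + CK) * (max C0 0 * ((4*CK) ^ n * s ^ n / (Nat.factorial n : ℝ))) := by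
      rw [abs_mul, abs_of_nonneg (add_nonneg (hK_nonneg _ _ _) (hK_nonneg _ _ _))]
      exact mul_le_mul (add_le_add (hK_bdd _ _ _) (hK_bdd _ _ _)) bv (abs_nonneg _)
        (add_nonneg hCK0 hCK0)
    rw [Real.norm_eq_abs, abs_le]
    obtain ⟨E1a, E1b⟩ := abs_le.mp e1
    obtain ⟨E2a, E2b⟩ := abs_le.mp e2
    obtain ⟨E3a, E3b⟩ := abs_le.mp e3
    constructor <;> [linarith; linarith]
  have hib : IntervalIntegrable
      (fun s => 4 * CK * (max C0 0 * ((4*CK) ^ n * s ^ n / (Nat.factorial n : ℝ))))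
      volume 0 t :=
    Continuous.intervalIntegrable (by fun_prop) 0 t
  have hIle := intervalIntegral.norm_integral_le_abs_of_norm_le
    ((ae_restrict_iff' measurableSet_uIoc).mpr (.of_forall hbound)) hib
  have hval : (∫ s in (0:ℝ)..t,
      4 * CK * (max C0 0 * ((4*CK) ^ n * s ^ n / (Nat.factorial n : ℝ))))
      = 4 * CK * (max C0 0 * ((4*CK) ^ n / (Nat.factorial n : ℝ))) * (t ^ (n+1) / ((n:ℝ)+1)) := by
    have hrw : ∀ s : ℝ, 4 * CK * (max C0 0 * ((4*CK) ^ n * s ^ n / (Nat.factorial n : ℝ)))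
        = (4 * CK * (max C0 0 * ((4*CK) ^ n / (Nat.factorial n : ℝ)))) * s ^ n := by
      intro s; ring
    simp_rw [hrw]
    rw [intervalIntegral.integral_const_mul, integral_pow, zero_pow (Nat.succ_ne_zero n)]
    push_cast
    ring
  have hE0 : (0:ℝ) ≤ 4 * CK * (max C0 0 * ((4*CK) ^ n / (Nat.factorial n : ℝ)))
      * (t ^ (n+1) / ((n:ℝ)+1)) := by
    apply mul_nonneg
    · apply mul_nonneg (by linarith)
      exact mul_nonneg hCf0 (div_nonneg (pow_nonneg (by linarith) _) (Nat.cast_nonneg _))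
    · exact div_nonneg (pow_nonneg ht0 _) (by positivity)
  have hfacne : ((Nat.factorial n : ℝ)) ≠ 0 :=
    Nat.cast_ne_zero.mpr (Nat.factorial_ne_zero n)
  have hn1 : ((n:ℝ) + 1) ≠ 0 := by positivity
  have hE' : 4 * CK * (max C0 0 * ((4*CK) ^ n / (Nat.factorial n : ℝ))) * (t ^ (n+1) / ((n:ℝ)+1))
      = max C0 0 * ((4*CK) ^ (n+1) * t ^ (n+1) / (Nat.factorial (n+1) : ℝ)) := by
    rw [Nat.factorial_succ]
    push_cast
    field_simp
    ring
  rw [heq, hφ0, zero_add, ← Real.norm_eq_abs]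
  refine hIle.trans ?_
  rw [hval, abs_of_nonneg hE0]
  exact le_of_eq hE'

private lemma aux_backward_support
    (T CK dμ Cbμ : ℝ) (c' : ℝ)
    (hT : 0 < T) (hCK : 0 < CK)
    (K : ℝ → ℝ → ℝ → ℝ)
    (hK_nonneg : ∀ x v v', 0 ≤ K x v v') (hK_bdd : ∀ x v v', K x v v' ≤ CK)
    (cscale : ℝ)
    (g : ℝ → ℝ → ℝ → ℝ)
    (C0 : ℝ) (hC0 : ∀ t x v, |g t x v| ≤ C0)
    (hg_eq : ∀ t ∈ Set.Icc (0 : ℝ) T, ∀ x : ℝ, ∀ v ∈ ({1, -1} : Set ℝ),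
      g t x v = (fun x (_ : ℝ) => cscale *
          (if x ∈ Set.Icc (c' - dμ) (c' + dμ) then Cbμ else 0)) (x + v * (T - t)) v +
        ∫ s in t..T,
          ((1:ℝ) * (K (x + v * (s - t)) 1 v * g s (x + v * (s - t)) 1
                + K (x + v * (s - t)) (-1) v * g s (x + v * (s - t)) (-1))
            - (K (x + v * (s - t)) 1 v + K (x + v * (s - t)) (-1) v)
                * g s (x + v * (s - t)) v
            + (fun _ _ _ => (0:ℝ)) s (x + v * (s - t)) v)) :
    ∀ t ∈ Set.Icc (0:ℝ) T, ∀ v ∈ ({1,-1} : Set ℝ), ∀ x,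
      (x < c' - dμ - (T - t) ∨ c' + dμ + (T - t) < x) → g t x v = 0 := by
  have hCK0 : (0:ℝ) ≤ CK := hCK.le
  have hCf0 : (0:ℝ) ≤ max C0 0 := le_max_right _ _
  have hvabs : ∀ v ∈ ({1,-1} : Set ℝ), ∀ τ : ℝ, 0 ≤ τ → -τ ≤ v * τ ∧ v * τ ≤ τ := by
    intro v hv τ hτ
    have hv' : v = 1 ∨ v = -1 := by simpa using hv
    rcases hv' with rfl | rfl
    · constructor <;> linarith
    · constructor <;> linarith
  refine gronwall_cone T (max C0 0) (4*CK) g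
      (fun t x => x < c' - dμ - (T - t) ∨ c' + dμ + (T - t) < x) (fun t => T - t)
      (fun t _ v _ x _ => (hC0 t x v).trans (le_max_left _ _)) ?_
  intro n ih t ht v hv x hx
  have ht0 : (0:ℝ) ≤ t := ht.1
  have htT : t ≤ T := ht.2
  have hvb := hvabs v hv
  have heq := hg_eq t ht x v hv
  simp only [one_mul, add_zero] at heq
  have hψ0 : (x + v * (T - t)) ∉ Set.Icc (c' - dμ) (c' + dμ) := by
    intro hmem
    obtain ⟨hm1, hm2⟩ := hmem
    have hvt := hvb (T - t) (by linarith)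
    rcases hx with hx | hx
    · linarith [hvt.1, hvt.2]
    · linarith [hvt.1, hvt.2]
  rw [if_neg hψ0, mul_zero, zero_add] at heq
  have hbound : ∀ s ∈ Set.uIoc t T,
      ‖(K (x + v * (s - t)) 1 v * g s (x + v * (s - t)) 1
          + K (x + v * (s - t)) (-1) v * g s (x + v * (s - t)) (-1)
        - (K (x + v * (s - t)) 1 v + K (x + v * (s - t)) (-1) v)
            * g s (x + v * (s - t)) v)‖
        ≤ 4 * CK * (max C0 0 * ((4*CK) ^ n * (T - s) ^ n / (Nat.factorial n : ℝ))) := by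
    intro s hs
    rw [Set.uIoc_of_le htT] at hs
    have hsIcc : s ∈ Set.Icc (0:ℝ) T := ⟨by linarith [hs.1], hs.2⟩
    set y := x + v * (s - t) with hy
    have houty : y < c' - dμ - (T - s) ∨ c' + dμ + (T - s) < y := by
      have hvt := hvb (s - t) (by linarith [hs.1])
      rcases hx with hx | hx
      · left; rw [hy]; linarith [hvt.1, hvt.2]
      · right; rw [hy]; linarith [hvt.1, hvt.2]
    have b1 : |g s y 1| ≤ max C0 0 * ((4*CK) ^ n * (T - s) ^ n / (Nat.factorial n : ℝ)) :=
      ih s hsIcc 1 (by simp) y houty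
    have b2 : |g s y (-1)| ≤ max C0 0 * ((4*CK) ^ n * (T - s) ^ n / (Nat.factorial n : ℝ)) :=
      ih s hsIcc (-1) (by simp) y houty
    have bv : |g s y v| ≤ max C0 0 * ((4*CK) ^ n * (T - s) ^ n / (Nat.factorial n : ℝ)) :=
      ih s hsIcc v hv y houty
    have e1 : |K y 1 v * g s y 1|
        ≤ CK * (max C0 0 * ((4*CK) ^ n * (T - s) ^ n / (Nat.factorial n : ℝ))) := by
      rw [abs_mul, abs_of_nonneg (hK_nonneg _ _ _)]
      exact mul_le_mul (hK_bdd _ _ _) b1 (abs_nonneg _) hCK0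
    have e2 : |K y (-1) v * g s y (-1)|
        ≤ CK * (max C0 0 * ((4*CK) ^ n * (T - s) ^ n / (Nat.factorial n : ℝ))) := by
      rw [abs_mul, abs_of_nonneg (hK_nonneg _ _ _)]
      exact mul_le_mul (hK_bdd _ _ _) b2 (abs_nonneg _) hCK0
    have e3 : |(K y 1 v + K y (-1) v) * g s y v|
        ≤ (CK + CK) * (max C0 0 * ((4*CK) ^ n * (T - s) ^ n / (Nat.factorial n : ℝ))) := by
      rw [abs_mul, abs_of_nonneg (add_nonneg (hK_nonneg _ _ _) (hK_nonneg _ _ _))]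
      exact mul_le_mul (add_le_add (hK_bdd _ _ _) (hK_bdd _ _ _)) bv (abs_nonneg _)
        (add_nonneg hCK0 hCK0)
    rw [Real.norm_eq_abs, abs_le]
    obtain ⟨E1a, E1b⟩ := abs_le.mp e1
    obtain ⟨E2a, E2b⟩ := abs_le.mp e2
    obtain ⟨E3a, E3b⟩ := abs_le.mp e3
    constructor <;> [linarith; linarith]
  have hib : IntervalIntegrable
      (fun s => 4 * CK * (max C0 0 * ((4*CK) ^ n * (T - s) ^ n / (Nat.factorial n : ℝ))))
      volume t T :=
    Continuous.intervalIntegrable (by fun_prop) t T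
  have hIle := intervalIntegral.norm_integral_le_abs_of_norm_le
    ((ae_restrict_iff' measurableSet_uIoc).mpr (.of_forall hbound)) hib
  have hval : (∫ s in t..T,
      4 * CK * (max C0 0 * ((4*CK) ^ n * (T - s) ^ n / (Nat.factorial n : ℝ))))
      = 4 * CK * (max C0 0 * ((4*CK) ^ n / (Nat.factorial n : ℝ)))
        * ((T - t) ^ (n+1) / ((n:ℝ)+1)) := by
    have hrw : ∀ s : ℝ,
        4 * CK * (max C0 0 * ((4*CK) ^ n * (T - s) ^ n / (Nat.factorial n : ℝ)))
        = (4 * CK * (max C0 0 * ((4*CK) ^ n / (Nat.factorial n : ℝ)))) * (T - s) ^ n := by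
      intro s; ring
    simp_rw [hrw]
    rw [intervalIntegral.integral_const_mul,
      intervalIntegral.integral_comp_sub_left (fun u => u ^ n) T, sub_self,
      integral_pow, zero_pow (Nat.succ_ne_zero n)]
    ring
  have hE0 : (0:ℝ) ≤ 4 * CK * (max C0 0 * ((4*CK) ^ n / (Nat.factorial n : ℝ)))
      * ((T - t) ^ (n+1) / ((n:ℝ)+1)) := by
    apply mul_nonneg
    · apply mul_nonneg (by linarith)
      exact mul_nonneg hCf0 (div_nonneg (pow_nonneg (by linarith) _) (Nat.cast_nonneg _))
    · exact div_nonneg (pow_nonneg (by linarith) _) (by positivity)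
  have hfacne : ((Nat.factorial n : ℝ)) ≠ 0 :=
    Nat.cast_ne_zero.mpr (Nat.factorial_ne_zero n)
  have hn1 : ((n:ℝ) + 1) ≠ 0 := by positivity
  have hE' : 4 * CK * (max C0 0 * ((4*CK) ^ n / (Nat.factorial n : ℝ)))
      * ((T - t) ^ (n+1) / ((n:ℝ)+1))
      = max C0 0 * ((4*CK) ^ (n+1) * (T - t) ^ (n+1) / (Nat.factorial (n+1) : ℝ)) := by
    rw [Nat.factorial_succ]
    push_cast
    field_simp
    ring
  rw [heq, ← Real.norm_eq_abs]
  refine hIle.trans ?_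
  rw [hval, abs_of_nonneg hE0]
  exact le_of_eq hE'

/-- decoupling under Design (D). With the partition `I_s = [a_{s−1}, a_s)`
of `[a₀,a_R)`, centers `c_r = (a_{r−1}+a_r)/2`, initial bump `φ_r` supported in
`c_r + [−d,d]` with `d < (a_s − a_{s−1})/4`, measurement windows of half-width `d_μ ≤ d`
centered at `c_r ± T`, and `T < (a_s − a_{s−1})/4 − d/2`, the forward solution `f_r` and the
adjoint solutions `g_{r,i}` stay supported in `I_r`; consequently all cross gradient
entries over `I_s`, `s ≠ r`, vanish (block-diagonal Hessian). -/
theorem design_decoupling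
    (T CK d dμ Cbμ : ℝ) (R r : ℕ)
    (hT : 0 < T) (hCK : 0 < CK) (hd : 0 < d) (hdμ0 : 0 < dμ) (hdμd : dμ ≤ d)
    (hCbμ : 0 < Cbμ)
    (hr : r ∈ Finset.Icc 1 R)
    (a : ℕ → ℝ) (ha : StrictMonoOn a (Set.Icc (0 : ℕ) R))
    (hd4 : ∀ s ∈ Finset.Icc 1 R, d < (a s - a (s - 1)) / 4)
    (hT4 : ∀ s ∈ Finset.Icc 1 R, T < (a s - a (s - 1)) / 4 - d / 2)
    (K : ℝ → ℝ → ℝ → ℝ)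
    (hK_nonneg : ∀ x v v', 0 ≤ K x v v') (hK_bdd : ∀ x v v', K x v v' ≤ CK)
    (φr : ℝ → ℝ → ℝ)
    (hφ_meas : Measurable fun p : ℝ × ℝ => φr p.1 p.2)
    (hφ_nonneg : ∀ x v, 0 ≤ φr x v) (hφ_bdd : ∃ C, ∀ x v, φr x v ≤ C)
    (hφ_supp : ∀ x : ℝ,
      x ∉ Set.Icc ((a (r - 1) + a r) / 2 - d) ((a (r - 1) + a r) / 2 + d) →
      ∀ v, φr x v = 0)
    (fr : ℝ → ℝ → ℝ → ℝ) (hfr : IsMildF T K φr (fun _ _ _ => 0) fr)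
    (sg : ℝ) (hsg : sg ∈ ({1, -1} : Set ℝ)) (cscale : ℝ)
    (g : ℝ → ℝ → ℝ → ℝ)
    (hg : IsMildGb T K 1
      (fun x _ => cscale *
        (if x ∈ Set.Icc ((a (r - 1) + a r) / 2 + sg * T - dμ)
            ((a (r - 1) + a r) / 2 + sg * T + dμ) then Cbμ else 0))
      (fun _ _ _ => 0) g) :
    (∀ t ∈ Set.Icc (0 : ℝ) T, ∀ v ∈ ({1, -1} : Set ℝ), ∀ x : ℝ,
      x ∉ Set.Ico (a (r - 1)) (a r) → fr t x v = 0 ∧ g t x v = 0) ∧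
    (∀ s ∈ Finset.Icc 1 R, s ≠ r →
      ∀ v ∈ ({1, -1} : Set ℝ), ∀ v' ∈ ({1, -1} : Set ℝ),
        (∫ t in (0 : ℝ)..T, ∫ x in Set.Ico (a (s - 1)) (a s),
            fr t x v' * (g t x v' - g t x v)) = 0) := by
  obtain ⟨hr1, hrR⟩ := Finset.mem_Icc.mp hr
  have hmemr1 : (r - 1 : ℕ) ∈ Set.Icc (0:ℕ) R := ⟨Nat.zero_le _, le_trans (Nat.sub_le r 1) hrR⟩
  have hmemr : r ∈ Set.Icc (0:ℕ) R := ⟨Nat.zero_le _, hrR⟩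
  have hdr := hd4 r hr
  have hTr := hT4 r hr
  obtain ⟨hf_meas, ⟨C0, hC0⟩, hf_eq⟩ := hfr
  obtain ⟨hg_meas, ⟨C1, hC1⟩, hg_eq⟩ := hg
  have hsgT : -T ≤ sg * T ∧ sg * T ≤ T := by
    have hsg' : sg = 1 ∨ sg = -1 := by simpa using hsg
    rcases hsg' with rfl | rfl <;> constructor <;> linarith
  have hFs := aux_forward_support T CK d ((a (r - 1) + a r) / 2) hT hCK hd K hK_nonneg hK_bdd
    φr hφ_supp fr C0 hC0 hf_eq
  have hGs := aux_backward_support T CK dμ Cbμ ((a (r - 1) + a r) / 2 + sg * T) hT hCK K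
    hK_nonneg hK_bdd cscale g C1 hC1 hg_eq
  have hpart1 : ∀ t ∈ Set.Icc (0:ℝ) T, ∀ v ∈ ({1,-1} : Set ℝ), ∀ x : ℝ,
      x ∉ Set.Ico (a (r - 1)) (a r) → fr t x v = 0 ∧ g t x v = 0 := by
    intro t ht v hv x hx
    have hx' : x < a (r - 1) ∨ a r ≤ x := by
      rw [Set.mem_Ico] at hx; push_neg at hx
      rcases le_or_gt (a (r - 1)) x with h | h
      · exact Or.inr (hx h)
      · exact Or.inl h
    constructor
    · refine hFs t ht v hv x ?_
      rcases hx' with h | h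
      · left; linarith [ht.2]
      · right; linarith [ht.2]
    · refine hGs t ht v hv x ?_
      rcases hx' with h | h
      · left; linarith [ht.1, ht.2, hsgT.1, hsgT.2]
      · right; linarith [ht.1, ht.2, hsgT.1, hsgT.2]
  refine ⟨hpart1, ?_⟩
  intro s hs hsr v hv v' hv'
  obtain ⟨hs1, hsR⟩ := Finset.mem_Icc.mp hs
  have hdisj : ∀ x ∈ Set.Ico (a (s - 1)) (a s), x ∉ Set.Ico (a (r - 1)) (a r) := by
    intro x hx hmem
    rcases lt_or_gt_of_ne hsr with h | h
    · have hle : a s ≤ a (r - 1) :=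
        ha.monotoneOn ⟨Nat.zero_le _, hsR⟩ hmemr1 (by omega)
      exact absurd hmem.1 (not_le.mpr (lt_of_lt_of_le hx.2 hle))
    · have hle : a r ≤ a (s - 1) :=
        ha.monotoneOn hmemr ⟨Nat.zero_le _, le_trans (Nat.sub_le s 1) hsR⟩ (by omega)
      exact absurd hmem.2 (not_lt.mpr (le_trans hle hx.1))
  have heqon : Set.EqOn
      (fun t => ∫ x in Set.Ico (a (s - 1)) (a s), fr t x v' * (g t x v' - g t x v))
      (fun _ => (0:ℝ)) (Set.uIcc 0 T) := by
    intro t ht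
    rw [Set.uIcc_of_le hT.le] at ht
    have hzero : Set.EqOn (fun x => fr t x v' * (g t x v' - g t x v))
        (fun _ => (0:ℝ)) (Set.Ico (a (s - 1)) (a s)) := by
      intro x hx
      simp only
      rw [(hpart1 t ht v' hv' x (hdisj x hx)).1, zero_mul]
    simp only
    rw [setIntegral_congr_fun measurableSet_Ico hzero]
    simp
  rw [intervalIntegral.integral_congr heqon]
  simp
end
end

section
/- Ballistic inequality: let V = {−1,+1}, let C_K, T, d, d_μ, C̄ > 0 with d_μ ≤ d < T, and let σ₁ : V → [0, 2C_K]. Let φ₁ : ℝ → [0,∞) be integrable, vanish outside [−d, d], be symmetric (φ₁(−x) = φ₁(x)) and nonincreasing in |x|, and let μ₁ = C̄ · 1_{[−T−d_μ, −T+d_μ]}. Define the ballistic solutions f⁰(t,x,w) = e^{−t σ₁(w)} φ₁(x − wt) and g⁰(t,x,w) = e^{−(T−t) σ₁(w)} μ₁(x + w(T−t)) for w ∈ V, and set C_{φμ} = ∫_ℝ φ₁(x) μ₁(x − T) dx. Let I₁ = [a₀, a₁] be an interval with a₀ ≤ −T−d and a₁ ≥ d. Then, for (v, v') = (+1, −1),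 the quantity B := |∫₀^T ∫_{I₁} f⁰(t,x,v') (g⁰(t,x,v') − g⁰(t,x,v)) dx dt| − |∫₀^T ∫_{I₁} f⁰(t,x,v) (g⁰(t,x,v) − g⁰(t,x,v')) dx dt| satisfies B ≥ C_{φμ} (e^{−2 C_K T} T − (d_μ + d)); in particular B > 0 whenever (d + d_μ)/T < e^{−2 C_K T}. -/
open MeasureTheory Real Set
noncomputable section

section Aux

variable {T d dμ Cb : ℝ} {φ₁ μ₁ : ℝ → ℝ}

/-- symmetry of the window integral -/
lemma window_symm (hφ_symm : ∀ x : ℝ, φ₁ (-x) = φ₁ x) (c : ℝ) :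
    (∫ x in (-c - dμ)..(-c + dμ), φ₁ x) = ∫ x in (c - dμ)..(c + dμ), φ₁ x := by
  have h := intervalIntegral.integral_comp_neg (a := c - dμ) (b := c + dμ) φ₁
  simp only [hφ_symm] at h
  rw [h]
  congr 1 <;> ring

lemma window_mono (hdμ : 0 ≤ dμ) (hφ_int : Integrable φ₁)
    (hφ_symm : ∀ x : ℝ, φ₁ (-x) = φ₁ x)
    (hφ_mono : ∀ x y : ℝ, |x| ≤ |y| → φ₁ y ≤ φ₁ x) (c : ℝ) :
    (∫ x in (c - dμ)..(c + dμ), φ₁ x) ≤ ∫ x in (0 - dμ)..(0 + dμ), φ₁ x := by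
  have key : ∀ c : ℝ, 0 ≤ c →
      (∫ x in (c - dμ)..(c + dμ), φ₁ x) ≤ ∫ x in (0 - dμ)..(0 + dμ), φ₁ x := by
    intro c hc
    rcases le_or_gt (2 * dμ) c with h2 | h2
    · have ht : (∫ x in (c - dμ)..(c + dμ), φ₁ x) = ∫ x in (-dμ)..dμ, φ₁ (x + c) := by
        rw [intervalIntegral.integral_comp_add_right]
        congr 1 <;> ring
      rw [ht]
      have := intervalIntegral.integral_mono_on (μ := volume)
        (f := fun x => φ₁ (x + c)) (g := φ₁) (a := -dμ) (b := dμ)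
        (by linarith) ((hφ_int.comp_add_right c).intervalIntegrable)
        hφ_int.intervalIntegrable ?_
      · calc (∫ x in (-dμ)..dμ, φ₁ (x + c)) ≤ ∫ x in (-dμ)..dμ, φ₁ x := this
          _ = ∫ x in (0 - dμ)..(0 + dμ), φ₁ x := by congr 1 <;> ring
      · intro x hx
        simp only [mem_Icc] at hx
        apply hφ_mono
        have h1 : |x| ≤ dμ := abs_le.mpr ⟨hx.1, hx.2⟩
        have h2 : 0 ≤ x + c := by linarith
        rw [abs_of_nonneg h2]
        linarith
    · -- near case
      have hint : ∀ a b : ℝ, IntervalIntegrable φ₁ volume a b := fun a b =>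
        hφ_int.intervalIntegrable
      have hsplit1 : (∫ x in (c - dμ)..(c + dμ), φ₁ x)
          = (∫ x in (c - dμ)..dμ, φ₁ x) + ∫ x in dμ..(c + dμ), φ₁ x := by
        rw [intervalIntegral.integral_add_adjacent_intervals (hint _ _) (hint _ _)]
      have hsplit2 : (∫ x in (0 - dμ)..(0 + dμ), φ₁ x)
          = (∫ x in (-dμ)..(c - dμ), φ₁ x) + ∫ x in (c - dμ)..dμ, φ₁ x := by
        rw [intervalIntegral.integral_add_adjacent_intervals (hint _ _) (hint _ _)]
        congr 1 <;> ring
      have hkey : (∫ x in dμ..(c + dμ), φ₁ x) ≤ ∫ x in (-dμ)..(c - dμ), φ₁ x := by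
        have ht : (∫ x in dμ..(c + dμ), φ₁ x) = ∫ x in (-dμ)..(c - dμ), φ₁ (x + 2 * dμ) := by
          rw [intervalIntegral.integral_comp_add_right]
          congr 1 <;> ring
        rw [ht]
        apply intervalIntegral.integral_mono_on (by linarith)
          ((hφ_int.comp_add_right (2 * dμ)).intervalIntegrable) hφ_int.intervalIntegrable
        intro x hx
        simp only [mem_Icc] at hx
        apply hφ_mono
        have h1 : |x| ≤ dμ := abs_le.mpr ⟨hx.1, by linarith⟩
        have h2 : 0 ≤ x + 2 * dμ := by linarith
        rw [abs_of_nonneg h2]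
        linarith
      linarith
  rcases le_total 0 c with hc | hc
  · exact key c hc
  · have h := window_symm (dμ := dμ) hφ_symm (-c)
    simp only [neg_neg] at h
    rw [h]
    exact key (-c) (by linarith)

lemma window_nonneg (hdμ : 0 ≤ dμ) (hφ_nonneg : ∀ x, 0 ≤ φ₁ x) (c : ℝ) :
    0 ≤ ∫ x in (c - dμ)..(c + dμ), φ₁ x :=
  intervalIntegral.integral_nonneg (by linarith) (fun x _ => hφ_nonneg x)

lemma window_zero (hdμ : 0 ≤ dμ)
    (hφ_supp : ∀ x : ℝ, x ∉ Set.Icc (-d) d → φ₁ x = 0) {c : ℝ} (h : c + dμ ≤ -d) :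
    (∫ x in (c - dμ)..(c + dμ), φ₁ x) = 0 := by
  rw [intervalIntegral.integral_of_le (by linarith), MeasureTheory.integral_Ioc_eq_integral_Ioo]
  rw [setIntegral_congr_fun measurableSet_Ioo (g := fun _ => (0 : ℝ))]
  · simp
  · intro x hx
    simp only [mem_Ioo] at hx
    apply hφ_supp
    simp only [mem_Icc, not_and_or, not_le]
    left; linarith [hx.2]

end Aux

section Aux2

variable {T d dμ Cb : ℝ} {φ₁ μ₁ : ℝ → ℝ}

lemma mu_measurable (hμ₁ : ∀ x : ℝ, μ₁ x = if x ∈ Set.Icc (-T - dμ) (-T + dμ) then Cb else 0) :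
    Measurable μ₁ := by
  have : μ₁ = fun x => if x ∈ Set.Icc (-T - dμ) (-T + dμ) then Cb else 0 := funext hμ₁
  rw [this]
  exact Measurable.ite measurableSet_Icc measurable_const measurable_const

lemma mu_nonneg (hCb : 0 ≤ Cb)
    (hμ₁ : ∀ x : ℝ, μ₁ x = if x ∈ Set.Icc (-T - dμ) (-T + dμ) then Cb else 0) (x : ℝ) :
    0 ≤ μ₁ x := by
  rw [hμ₁]; split <;> simp [hCb]

lemma mu_le (hCb : 0 ≤ Cb)
    (hμ₁ : ∀ x : ℝ, μ₁ x = if x ∈ Set.Icc (-T - dμ) (-T + dμ) then Cb else 0) (x : ℝ) :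
    μ₁ x ≤ Cb := by
  rw [hμ₁]; split <;> simp [hCb]

lemma prod_integrable (hCb : 0 ≤ Cb)
    (hμ₁ : ∀ x : ℝ, μ₁ x = if x ∈ Set.Icc (-T - dμ) (-T + dμ) then Cb else 0)
    (hφ_int : Integrable φ₁) (s r : ℝ) :
    Integrable (fun x => φ₁ (x + s) * μ₁ (x - r)) := by
  have hm : AEStronglyMeasurable (fun x : ℝ => μ₁ (x - r)) volume :=
    ((mu_measurable hμ₁).comp (measurable_id.sub_const r)).aestronglyMeasurable
  have h := (hφ_int.comp_add_right s).bdd_mul (c := Cb) hm (Filter.Eventually.of_forall fun x => by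
    rw [Real.norm_eq_abs, abs_le]
    exact ⟨by linarith [mu_nonneg hCb hμ₁ (x - r)], mu_le hCb hμ₁ (x - r)⟩)
  exact h.congr (Filter.Eventually.of_forall fun x => by ring)

lemma full_eq
    (hμ₁ : ∀ x : ℝ, μ₁ x = if x ∈ Set.Icc (-T - dμ) (-T + dμ) then Cb else 0)
    (hdμ : 0 ≤ dμ) (s r : ℝ) :
    (∫ x : ℝ, φ₁ (x + s) * μ₁ (x - r))
      = Cb * ∫ x in (r - T + s - dμ)..(r - T + s + dμ), φ₁ x := by
  have h1 : ∀ x : ℝ, φ₁ (x + s) * μ₁ (x - r)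
      = (Set.Icc (r - T - dμ) (r - T + dμ)).indicator (fun x => Cb * φ₁ (x + s)) x := by
    intro x
    rw [hμ₁]
    by_cases hx : x ∈ Set.Icc (r - T - dμ) (r - T + dμ)
    · rw [indicator_of_mem hx]
      simp only [mem_Icc] at hx
      rw [if_pos (by simp only [mem_Icc]; constructor <;> linarith [hx.1, hx.2])]
      ring
    · rw [indicator_of_notMem hx]
      simp only [mem_Icc, not_and_or, not_le] at hx
      rw [if_neg (by
        simp only [mem_Icc, not_and_or, not_le]
        rcases hx with h | h
        · left; linarith
        · right; linarith)]
      ring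
  simp_rw [h1]
  rw [integral_indicator measurableSet_Icc, MeasureTheory.integral_const_mul,
    integral_Icc_eq_integral_Ioc, ← intervalIntegral.integral_of_le (by linarith),
    intervalIntegral.integral_comp_add_right]
  congr 1 <;> ring

end Aux2

section Aux3

variable {T d dμ Cb : ℝ} {φ₁ μ₁ : ℝ → ℝ}

lemma window_pos (hd : 0 < d) (hdμ : 0 < dμ)
    (hφ_int : Integrable φ₁) (hφ_nonneg : ∀ x, 0 ≤ φ₁ x)
    (hφ_mono : ∀ x y : ℝ, |x| ≤ |y| → φ₁ y ≤ φ₁ x)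
    (hφ_pos : 0 < ∫ x : ℝ, φ₁ x) :
    0 < ∫ x in (0 - dμ)..(0 + dμ), φ₁ x := by
  by_contra hcon
  push_neg at hcon
  have h0 : (∫ x in (0 - dμ)..(0 + dμ), φ₁ x) = 0 :=
    le_antisymm hcon (window_nonneg hdμ.le hφ_nonneg 0)
  have hsplit : (∫ x in (0 - dμ)..(0 + dμ), φ₁ x)
      = (∫ x in (0 - dμ)..(0:ℝ), φ₁ x) + ∫ x in (0:ℝ)..(0 + dμ), φ₁ x :=
    (intervalIntegral.integral_add_adjacent_intervals hφ_int.intervalIntegrable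
      hφ_int.intervalIntegrable).symm
  have ha : 0 ≤ ∫ x in (0 - dμ)..(0:ℝ), φ₁ x :=
    intervalIntegral.integral_nonneg (by linarith) fun x _ => hφ_nonneg x
  have hb : 0 ≤ ∫ x in (0:ℝ)..(0 + dμ), φ₁ x :=
    intervalIntegral.integral_nonneg (by linarith) fun x _ => hφ_nonneg x
  have h1 : (∫ x in (0:ℝ)..(0 + dμ), φ₁ x) = 0 := by linarith
  have h2 : dμ * φ₁ dμ ≤ 0 := by
    have hmono := intervalIntegral.integral_mono_on (μ := volume)
      (f := fun _ => φ₁ dμ) (g := φ₁) (a := (0:ℝ)) (b := 0 + dμ)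
      (by linarith) intervalIntegrable_const hφ_int.intervalIntegrable ?_
    · rw [intervalIntegral.integral_const, h1] at hmono
      simp only [smul_eq_mul] at hmono
      nlinarith [hmono]
    · intro x hx
      simp only [mem_Icc] at hx
      exact hφ_mono x dμ (by rw [abs_of_nonneg hx.1, abs_of_pos hdμ]; linarith [hx.2])
  have hφdμ : φ₁ dμ = 0 := le_antisymm (by nlinarith) (hφ_nonneg dμ)
  have h3 : ∀ x : ℝ, x ∉ Set.Icc (-dμ) dμ → φ₁ x = 0 := by
    intro x hx
    simp only [mem_Icc, not_and_or, not_le] at hx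
    refine le_antisymm ?_ (hφ_nonneg x)
    have hle : φ₁ x ≤ φ₁ dμ := by
      apply hφ_mono dμ x
      rw [abs_of_pos hdμ]
      rcases hx with h | h
      · rw [abs_of_neg (by linarith)]; linarith
      · rw [abs_of_pos (by linarith)]; linarith
    linarith
  have h4 : (∫ x : ℝ, φ₁ x) = ∫ x in Set.Icc (-dμ) dμ, φ₁ x :=
    (setIntegral_eq_integral_of_forall_compl_eq_zero h3).symm
  rw [h4, integral_Icc_eq_integral_Ioc,
    ← intervalIntegral.integral_of_le (by linarith : -dμ ≤ dμ)] at hφ_pos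
  have heq : (∫ x in (-dμ)..dμ, φ₁ x) = ∫ x in (0 - dμ)..(0 + dμ), φ₁ x := by
    congr 1 <;> ring
  rw [heq] at hφ_pos
  linarith

lemma inner_eq {a₀ a₁ : ℝ}
    (hμ₁ : ∀ x : ℝ, μ₁ x = if x ∈ Set.Icc (-T - dμ) (-T + dμ) then Cb else 0)
    (hdμ : 0 ≤ dμ) (s r u : ℝ) (hu : u = r - T + s)
    (f g : ℝ → ℝ) (hf : ∀ x, f x = φ₁ (x + s)) (hg : ∀ x, g x = μ₁ (x - r))
    (hsub : ∀ x : ℝ, φ₁ (x + s) * μ₁ (x - r) ≠ 0 → x ∈ Set.Icc a₀ a₁) :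
    (∫ x in Set.Icc a₀ a₁, f x * g x) = Cb * ∫ x in (u - dμ)..(u + dμ), φ₁ x := by
  calc (∫ x in Set.Icc a₀ a₁, f x * g x)
      = ∫ x in Set.Icc a₀ a₁, φ₁ (x + s) * μ₁ (x - r) := by simp_rw [hf, hg]
    _ = ∫ x : ℝ, φ₁ (x + s) * μ₁ (x - r) :=
        setIntegral_eq_integral_of_forall_compl_eq_zero (fun x hx => by
          by_contra h; exact hx (hsub x h))
    _ = Cb * ∫ x in (r - T + s - dμ)..(r - T + s + dμ), φ₁ x := full_eq hμ₁ hdμ s r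
    _ = Cb * ∫ x in (u - dμ)..(u + dμ), φ₁ x := by rw [hu]

end Aux3
set_option maxHeartbeats 1000000 in
/-- ballistic inequality for the design analysis. With the ballistic parts
`f⁰(t,x,w) = e^{−tσ₁(w)} φ₁(x−wt)` and `g⁰(t,x,w) = e^{−(T−t)σ₁(w)} μ₁(x+w(T−t))`, the
quantity `B` (difference of the two absolute ballistic gradient entries for
`(v,v') = (+1,−1)`) satisfies `B ≥ C_{φμ}(e^{−2C_K T} T − (d_μ + d))`, which is positive
when `(d+d_μ)/T < e^{−2C_K T}`. -/
theorem ballistic_inequality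
    (CK T d dμ Cb a₀ a₁ Cφμ B : ℝ)
    (hCK : 0 < CK) (hT : 0 < T) (hd : 0 < d) (hdμ : 0 < dμ) (hCb : 0 < Cb)
    (hdμd : dμ ≤ d) (hdT : d < T)
    (σ₁ : ℝ → ℝ) (hσ : ∀ w ∈ ({1, -1} : Set ℝ), 0 ≤ σ₁ w ∧ σ₁ w ≤ 2 * CK)
    (φ₁ : ℝ → ℝ) (hφ_int : Integrable φ₁) (hφ_nonneg : ∀ x, 0 ≤ φ₁ x)
    (hφ_supp : ∀ x : ℝ, x ∉ Set.Icc (-d) d → φ₁ x = 0)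
    (hφ_symm : ∀ x : ℝ, φ₁ (-x) = φ₁ x)
    (hφ_mono : ∀ x y : ℝ, |x| ≤ |y| → φ₁ y ≤ φ₁ x)
    (hφ_pos : 0 < ∫ x : ℝ, φ₁ x)
    (μ₁ : ℝ → ℝ)
    (hμ₁ : ∀ x : ℝ, μ₁ x = if x ∈ Set.Icc (-T - dμ) (-T + dμ) then Cb else 0)
    (ha₀ : a₀ ≤ -T - d) (ha₁ : d ≤ a₁)
    (hCφμ : Cφμ = ∫ x : ℝ, φ₁ x * μ₁ (x - T))
    (hB : B =
      |∫ t in (0 : ℝ)..T, ∫ x in Set.Icc a₀ a₁,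
          (Real.exp (-t * σ₁ (-1)) * φ₁ (x + t)) *
            (Real.exp (-(T - t) * σ₁ (-1)) * μ₁ (x - (T - t))
              - Real.exp (-(T - t) * σ₁ 1) * μ₁ (x + (T - t)))| -
      |∫ t in (0 : ℝ)..T, ∫ x in Set.Icc a₀ a₁,
          (Real.exp (-t * σ₁ 1) * φ₁ (x - t)) *
            (Real.exp (-(T - t) * σ₁ 1) * μ₁ (x + (T - t))
              - Real.exp (-(T - t) * σ₁ (-1)) * μ₁ (x - (T - t)))|) :
    Cφμ * (Real.exp (-2 * CK * T) * T - (dμ + d)) ≤ B ∧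
      ((d + dμ) / T < Real.exp (-2 * CK * T) → 0 < B) := by
  obtain ⟨hσp, hσp'⟩ := hσ 1 (by simp)
  obtain ⟨hσm, hσm'⟩ := hσ (-1) (by simp)
  set σp := σ₁ 1 with hσpdef
  set σm := σ₁ (-1) with hσmdef
  set W : ℝ → ℝ := fun c => ∫ x in (c - dμ)..(c + dμ), φ₁ x with hWdef
  -- basic facts about W
  have hW0 : 0 ≤ W 0 := window_nonneg hdμ.le hφ_nonneg 0
  have hWnonneg : ∀ c, 0 ≤ W c := window_nonneg hdμ.le hφ_nonneg
  have hWmono : ∀ c, W c ≤ W 0 := window_mono hdμ.le hφ_int hφ_symm hφ_mono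
  have hWzero : ∀ c, c + dμ ≤ -d → W c = 0 := fun c hc => window_zero hdμ.le hφ_supp hc
  have hWpos : 0 < W 0 := window_pos hd hdμ hφ_int hφ_nonneg hφ_mono hφ_pos
  -- continuity of W
  have hP : Continuous fun x : ℝ => ∫ u in (0:ℝ)..x, φ₁ u := hφ_int.continuous_primitive 0
  have hWeq : ∀ c, W c = (∫ u in (0:ℝ)..(c + dμ), φ₁ u) - ∫ u in (0:ℝ)..(c - dμ), φ₁ u := by
    intro c
    have h := intervalIntegral.integral_add_adjacent_intervals
      (a := (0:ℝ)) (b := c - dμ) (c := c + dμ)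
      hφ_int.intervalIntegrable hφ_int.intervalIntegrable
    show (∫ x in (c - dμ)..(c + dμ), φ₁ x) = _
    linarith
  have hWc : Continuous W := by
    have h : Continuous fun c : ℝ =>
        (∫ u in (0:ℝ)..(c + dμ), φ₁ u) - ∫ u in (0:ℝ)..(c - dμ), φ₁ u :=
      (hP.comp (continuous_id.add continuous_const)).sub
        (hP.comp (continuous_id.sub continuous_const))
    exact h.congr fun c => (hWeq c).symm
  -- Cφμ = Cb * W 0
  have hCφμ' : Cφμ = Cb * W 0 := by
    rw [hCφμ]
    have h1 : (∫ x : ℝ, φ₁ x * μ₁ (x - T)) = ∫ x : ℝ, φ₁ (x + 0) * μ₁ (x - T) := by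
      simp only [add_zero]
    rw [h1, full_eq hμ₁ hdμ.le 0 T]
    congr 1
    show _ = ∫ x in ((0:ℝ) - dμ)..((0:ℝ) + dμ), φ₁ x
    congr 1 <;> ring
  -- inner integral computations
  have hsub1 : ∀ t, 0 ≤ t → t ≤ T →
      ∀ x : ℝ, φ₁ (x + t) * μ₁ (x - (T - t)) ≠ 0 → x ∈ Set.Icc a₀ a₁ := by
    intro t ht0 htT x hx
    have hμ : μ₁ (x - (T - t)) ≠ 0 := right_ne_zero_of_mul hx
    have hmem : x - (T - t) ∈ Set.Icc (-T - dμ) (-T + dμ) := by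
      by_contra hm
      rw [hμ₁, if_neg hm] at hμ
      exact hμ rfl
    simp only [mem_Icc] at hmem ⊢
    constructor <;> linarith [hmem.1, hmem.2]
  have hsub2 : ∀ t, 0 ≤ t → t ≤ T →
      ∀ x : ℝ, φ₁ (x + t) * μ₁ (x - (t - T)) ≠ 0 → x ∈ Set.Icc a₀ a₁ := by
    intro t ht0 htT x hx
    have hφ : φ₁ (x + t) ≠ 0 := left_ne_zero_of_mul hx
    have hmem : x + t ∈ Set.Icc (-d) d := by
      by_contra hm
      exact hφ (hφ_supp _ hm)
    simp only [mem_Icc] at hmem ⊢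
    constructor <;> linarith [hmem.1, hmem.2]
  have key1 : ∀ t ∈ Set.Icc (0:ℝ) T,
      (∫ x in Set.Icc a₀ a₁,
          (Real.exp (-t * σm) * φ₁ (x + t)) *
            (Real.exp (-(T - t) * σm) * μ₁ (x - (T - t))
              - Real.exp (-(T - t) * σp) * μ₁ (x + (T - t))))
        = Real.exp (-T * σm) * (Cb * W 0)
          - Real.exp (-t * σm) * Real.exp (-(T - t) * σp) * (Cb * W (2*t - 2*T)) := by
    intro t ht
    simp only [mem_Icc] at ht
    have e1 : ∀ x : ℝ,
        (Real.exp (-t * σm) * φ₁ (x + t)) *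
            (Real.exp (-(T - t) * σm) * μ₁ (x - (T - t))
              - Real.exp (-(T - t) * σp) * μ₁ (x + (T - t)))
        = Real.exp (-t * σm) * Real.exp (-(T - t) * σm) * (φ₁ (x + t) * μ₁ (x - (T - t)))
          - Real.exp (-t * σm) * Real.exp (-(T - t) * σp) * (φ₁ (x + t) * μ₁ (x + (T - t))) := by
      intro x; ring
    rw [setIntegral_congr_fun measurableSet_Icc (fun x _ => e1 x)]
    have int1 : IntegrableOn
        (fun x => Real.exp (-t * σm) * Real.exp (-(T - t) * σm) * (φ₁ (x + t) * μ₁ (x - (T - t))))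
        (Set.Icc a₀ a₁) volume :=
      ((prod_integrable hCb.le hμ₁ hφ_int t (T - t)).const_mul _).integrableOn
    have int2 : IntegrableOn
        (fun x => Real.exp (-t * σm) * Real.exp (-(T - t) * σp) * (φ₁ (x + t) * μ₁ (x + (T - t))))
        (Set.Icc a₀ a₁) volume := by
      refine (Integrable.integrableOn ?_)
      refine ((prod_integrable hCb.le hμ₁ hφ_int t (t - T)).const_mul
        (Real.exp (-t * σm) * Real.exp (-(T - t) * σp))).congr
        (Filter.Eventually.of_forall fun x => ?_)
      simp only [show x - (t - T) = x + (T - t) from by ring]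
    rw [integral_sub int1 int2, MeasureTheory.integral_const_mul, MeasureTheory.integral_const_mul]
    have i1 : (∫ x in Set.Icc a₀ a₁, φ₁ (x + t) * μ₁ (x - (T - t))) = Cb * W 0 :=
      inner_eq hμ₁ hdμ.le t (T - t) 0 (by ring) _ _ (fun x => rfl) (fun x => rfl)
        (hsub1 t ht.1 ht.2)
    have i2 : (∫ x in Set.Icc a₀ a₁, φ₁ (x + t) * μ₁ (x + (T - t))) = Cb * W (2*t - 2*T) :=
      inner_eq hμ₁ hdμ.le t (t - T) (2*t - 2*T) (by ring) _ _ (fun x => rfl)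
        (fun x => by rw [show x - (t - T) = x + (T - t) from by ring])
        (hsub2 t ht.1 ht.2)
    rw [i1, i2, ← Real.exp_add]
    congr 2
    ring
  have key2 : ∀ t ∈ Set.Icc (0:ℝ) T,
      (∫ x in Set.Icc a₀ a₁,
          (Real.exp (-t * σp) * φ₁ (x - t)) *
            (Real.exp (-(T - t) * σp) * μ₁ (x + (T - t))
              - Real.exp (-(T - t) * σm) * μ₁ (x - (T - t))))
        = -(Real.exp (-t * σp) * Real.exp (-(T - t) * σm) * (Cb * W (-(2*t)))) := by
    intro t ht
    simp only [mem_Icc] at ht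
    have hzero : ∀ x : ℝ, φ₁ (x - t) * μ₁ (x + (T - t)) = 0 := by
      intro x
      by_cases hφ : φ₁ (x - t) = 0
      · rw [hφ, zero_mul]
      · have hx : x - t ∈ Set.Icc (-d) d := by
          by_contra hm; exact hφ (hφ_supp _ hm)
        simp only [mem_Icc] at hx
        have hμz : μ₁ (x + (T - t)) = 0 := by
          rw [hμ₁, if_neg]
          simp only [mem_Icc, not_and_or, not_le]
          right
          linarith [hx.1]
        rw [hμz, mul_zero]
    have e2 : ∀ x : ℝ,
        (Real.exp (-t * σp) * φ₁ (x - t)) *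
            (Real.exp (-(T - t) * σp) * μ₁ (x + (T - t))
              - Real.exp (-(T - t) * σm) * μ₁ (x - (T - t)))
        = -(Real.exp (-t * σp) * Real.exp (-(T - t) * σm) * (φ₁ (x - t) * μ₁ (x - (T - t)))) := by
      intro x
      have h0 := hzero x
      linear_combination (Real.exp (-t * σp) * Real.exp (-(T - t) * σp)) * h0
    rw [setIntegral_congr_fun measurableSet_Icc (fun x _ => e2 x)]
    have int3 : IntegrableOn
        (fun x => Real.exp (-t * σp) * Real.exp (-(T - t) * σm) * (φ₁ (x - t) * μ₁ (x - (T - t))))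
        (Set.Icc a₀ a₁) volume := by
      refine Integrable.integrableOn ?_
      refine ((prod_integrable hCb.le hμ₁ hφ_int (-t) (T - t)).const_mul
        (Real.exp (-t * σp) * Real.exp (-(T - t) * σm))).congr
        (Filter.Eventually.of_forall fun x => ?_)
      simp only [show x + -t = x - t from by ring]
    rw [integral_neg, MeasureTheory.integral_const_mul]
    have hsub3 : ∀ x : ℝ, φ₁ (x + -t) * μ₁ (x - (T - t)) ≠ 0 → x ∈ Set.Icc a₀ a₁ := by
      intro x hx
      have hμ : μ₁ (x - (T - t)) ≠ 0 := right_ne_zero_of_mul hx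
      have hmem : x - (T - t) ∈ Set.Icc (-T - dμ) (-T + dμ) := by
        by_contra hm
        rw [hμ₁, if_neg hm] at hμ
        exact hμ rfl
      simp only [mem_Icc] at hmem ⊢
      constructor <;> linarith [hmem.1, hmem.2, ht.1, ht.2]
    have i3 : (∫ x in Set.Icc a₀ a₁, φ₁ (x - t) * μ₁ (x - (T - t))) = Cb * W (-(2*t)) :=
      inner_eq hμ₁ hdμ.le (-t) (T - t) (-(2*t)) (by ring) _ _
        (fun x => by rw [show x - t = x + -t from by ring]) (fun x => rfl) hsub3
    rw [i3]
  -- outer integrals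
  have hE2c : Continuous fun t : ℝ =>
      Real.exp (-t * σm) * Real.exp (-(T - t) * σp) * (Cb * W (2*t - 2*T)) := by
    refine Continuous.mul (Continuous.mul ?_ ?_) ?_
    · exact Real.continuous_exp.comp (continuous_neg.mul continuous_const)
    · exact Real.continuous_exp.comp (((continuous_const.sub continuous_id).neg).mul
        continuous_const)
    · exact continuous_const.mul (hWc.comp
        ((continuous_const.mul continuous_id).sub continuous_const))
  have hE3c : Continuous fun t : ℝ =>
      Real.exp (-t * σp) * Real.exp (-(T - t) * σm) * (Cb * W (-(2*t))) := by
    refine Continuous.mul (Continuous.mul ?_ ?_) ?_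
    · exact Real.continuous_exp.comp (continuous_neg.mul continuous_const)
    · exact Real.continuous_exp.comp (((continuous_const.sub continuous_id).neg).mul
        continuous_const)
    · exact continuous_const.mul (hWc.comp (continuous_const.mul continuous_id).neg)
  have houter1 : (∫ t in (0:ℝ)..T, ∫ x in Set.Icc a₀ a₁,
        (Real.exp (-t * σm) * φ₁ (x + t)) *
          (Real.exp (-(T - t) * σm) * μ₁ (x - (T - t))
            - Real.exp (-(T - t) * σp) * μ₁ (x + (T - t))))
      = T * (Real.exp (-T * σm) * (Cb * W 0))
        - ∫ t in (0:ℝ)..T,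
            Real.exp (-t * σm) * Real.exp (-(T - t) * σp) * (Cb * W (2*t - 2*T)) := by
    rw [intervalIntegral.integral_congr (g := fun t => Real.exp (-T * σm) * (Cb * W 0)
      - Real.exp (-t * σm) * Real.exp (-(T - t) * σp) * (Cb * W (2*t - 2*T)))
      (fun t ht => key1 t (by rwa [Set.uIcc_of_le hT.le] at ht))]
    rw [intervalIntegral.integral_sub intervalIntegrable_const
      (hE2c.intervalIntegrable 0 T), intervalIntegral.integral_const, smul_eq_mul]
    ring
  have houter2 : (∫ t in (0:ℝ)..T, ∫ x in Set.Icc a₀ a₁,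
        (Real.exp (-t * σp) * φ₁ (x - t)) *
          (Real.exp (-(T - t) * σp) * μ₁ (x + (T - t))
            - Real.exp (-(T - t) * σm) * μ₁ (x - (T - t))))
      = -∫ t in (0:ℝ)..T,
            Real.exp (-t * σp) * Real.exp (-(T - t) * σm) * (Cb * W (-(2*t))) := by
    rw [intervalIntegral.integral_congr (g := fun t =>
        -(Real.exp (-t * σp) * Real.exp (-(T - t) * σm) * (Cb * W (-(2*t)))))
      (fun t ht => key2 t (by rwa [Set.uIcc_of_le hT.le] at ht))]
    rw [intervalIntegral.integral_neg]
  -- bounds on the error integrals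
  have hexp_le_one : ∀ (u σ : ℝ), 0 ≤ u → 0 ≤ σ → Real.exp (-u * σ) ≤ 1 := by
    intro u σ hu hσ0
    rw [Real.exp_le_one_iff]
    nlinarith
  have hE2nonneg : ∀ t : ℝ,
      0 ≤ Real.exp (-t * σm) * Real.exp (-(T - t) * σp) * (Cb * W (2*t - 2*T)) := by
    intro t
    have := hWnonneg (2*t - 2*T)
    positivity
  have hE3nonneg : ∀ t : ℝ,
      0 ≤ Real.exp (-t * σp) * Real.exp (-(T - t) * σm) * (Cb * W (-(2*t))) := by
    intro t
    have := hWnonneg (-(2*t))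
    positivity
  have hEbound : ∀ t : ℝ, 0 ≤ t → t ≤ T → ∀ e1 e2 : ℝ, 0 < e1 → e1 ≤ 1 → 0 < e2 → e2 ≤ 1 →
      ∀ c : ℝ, e1 * e2 * (Cb * W c) ≤ Cb * W 0 := by
    intro t ht0 htT e1 e2 he1 he1' he2 he2' c
    have h1 : e1 * e2 ≤ 1 := mul_le_one₀ he1' he2.le he2'
    have h2 : Cb * W c ≤ Cb * W 0 := by
      have := hWmono c
      nlinarith
    have h3 : 0 ≤ Cb * W c := by
      have := hWnonneg c
      positivity
    calc e1 * e2 * (Cb * W c) ≤ 1 * (Cb * W 0) := mul_le_mul h1 h2 h3 zero_le_one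
      _ = Cb * W 0 := one_mul _
  have hc₀ : 0 < T - (d + dμ)/2 := by linarith
  have hI2 : (∫ t in (0:ℝ)..T,
      Real.exp (-t * σm) * Real.exp (-(T - t) * σp) * (Cb * W (2*t - 2*T)))
      ≤ Cb * W 0 * ((d + dμ)/2) := by
    have hsplit : (∫ t in (0:ℝ)..T,
          Real.exp (-t * σm) * Real.exp (-(T - t) * σp) * (Cb * W (2*t - 2*T)))
        = (∫ t in (0:ℝ)..(T - (d + dμ)/2),
            Real.exp (-t * σm) * Real.exp (-(T - t) * σp) * (Cb * W (2*t - 2*T)))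
          + ∫ t in (T - (d + dμ)/2)..T,
            Real.exp (-t * σm) * Real.exp (-(T - t) * σp) * (Cb * W (2*t - 2*T)) :=
      (intervalIntegral.integral_add_adjacent_intervals (hE2c.intervalIntegrable _ _)
        (hE2c.intervalIntegrable _ _)).symm
    have hz : (∫ t in (0:ℝ)..(T - (d + dμ)/2),
        Real.exp (-t * σm) * Real.exp (-(T - t) * σp) * (Cb * W (2*t - 2*T))) = 0 := by
      rw [intervalIntegral.integral_congr (g := fun _ => (0:ℝ))
        (fun t ht => ?_)]
      · simp
      · rw [Set.uIcc_of_le hc₀.le] at ht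
        simp only [mem_Icc] at ht
        have hWz : W (2*t - 2*T) = 0 := hWzero _ (by linarith [ht.2])
        show Real.exp (-t * σm) * Real.exp (-(T - t) * σp) * (Cb * W (2*t - 2*T)) = 0
        rw [hWz]
        ring
    have hb : (∫ t in (T - (d + dμ)/2)..T,
        Real.exp (-t * σm) * Real.exp (-(T - t) * σp) * (Cb * W (2*t - 2*T)))
        ≤ Cb * W 0 * ((d + dμ)/2) := by
      calc (∫ t in (T - (d + dμ)/2)..T,
            Real.exp (-t * σm) * Real.exp (-(T - t) * σp) * (Cb * W (2*t - 2*T)))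
          ≤ ∫ _t in (T - (d + dμ)/2)..T, Cb * W 0 := by
            apply intervalIntegral.integral_mono_on (by linarith)
              (hE2c.intervalIntegrable _ _) intervalIntegrable_const
            intro t ht
            simp only [mem_Icc] at ht
            exact hEbound t (by linarith) ht.2 _ _ (Real.exp_pos _)
              (hexp_le_one t σm (by linarith) hσm) (Real.exp_pos _)
              (by
                have : -(T - t) * σp = -((T - t) * σp) := by ring
                rw [Real.exp_le_one_iff]
                nlinarith [ht.2]) _
        _ = Cb * W 0 * ((d + dμ)/2) := by
            rw [intervalIntegral.integral_const, smul_eq_mul]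
            ring
    linarith
  have hI2nonneg : 0 ≤ ∫ t in (0:ℝ)..T,
      Real.exp (-t * σm) * Real.exp (-(T - t) * σp) * (Cb * W (2*t - 2*T)) :=
    intervalIntegral.integral_nonneg hT.le fun t _ => hE2nonneg t
  have hI3 : (∫ t in (0:ℝ)..T,
      Real.exp (-t * σp) * Real.exp (-(T - t) * σm) * (Cb * W (-(2*t))))
      ≤ Cb * W 0 * ((d + dμ)/2) := by
    have hsplit : (∫ t in (0:ℝ)..T,
          Real.exp (-t * σp) * Real.exp (-(T - t) * σm) * (Cb * W (-(2*t))))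
        = (∫ t in (0:ℝ)..((d + dμ)/2),
            Real.exp (-t * σp) * Real.exp (-(T - t) * σm) * (Cb * W (-(2*t))))
          + ∫ t in ((d + dμ)/2)..T,
            Real.exp (-t * σp) * Real.exp (-(T - t) * σm) * (Cb * W (-(2*t))) :=
      (intervalIntegral.integral_add_adjacent_intervals (hE3c.intervalIntegrable _ _)
        (hE3c.intervalIntegrable _ _)).symm
    have hz : (∫ t in ((d + dμ)/2)..T,
        Real.exp (-t * σp) * Real.exp (-(T - t) * σm) * (Cb * W (-(2*t)))) = 0 := by
      rw [intervalIntegral.integral_congr (g := fun _ => (0:ℝ))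
        (fun t ht => ?_)]
      · simp
      · rw [Set.uIcc_of_le (by linarith)] at ht
        simp only [mem_Icc] at ht
        have hWz : W (-(2*t)) = 0 := hWzero _ (by linarith [ht.1])
        show Real.exp (-t * σp) * Real.exp (-(T - t) * σm) * (Cb * W (-(2*t))) = 0
        rw [hWz]
        ring
    have hb : (∫ t in (0:ℝ)..((d + dμ)/2),
        Real.exp (-t * σp) * Real.exp (-(T - t) * σm) * (Cb * W (-(2*t))))
        ≤ Cb * W 0 * ((d + dμ)/2) := by
      calc (∫ t in (0:ℝ)..((d + dμ)/2),
            Real.exp (-t * σp) * Real.exp (-(T - t) * σm) * (Cb * W (-(2*t))))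
          ≤ ∫ _t in (0:ℝ)..((d + dμ)/2), Cb * W 0 := by
            apply intervalIntegral.integral_mono_on (by linarith)
              (hE3c.intervalIntegrable _ _) intervalIntegrable_const
            intro t ht
            simp only [mem_Icc] at ht
            exact hEbound t ht.1 (by linarith [ht.2]) _ _ (Real.exp_pos _)
              (hexp_le_one t σp ht.1 hσp) (Real.exp_pos _)
              (by
                rw [Real.exp_le_one_iff]
                nlinarith [ht.2]) _
        _ = Cb * W 0 * ((d + dμ)/2) := by
            rw [intervalIntegral.integral_const, smul_eq_mul]
            ring
    linarith
  have hI3nonneg : 0 ≤ ∫ t in (0:ℝ)..T,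
      Real.exp (-t * σp) * Real.exp (-(T - t) * σm) * (Cb * W (-(2*t))) :=
    intervalIntegral.integral_nonneg hT.le fun t _ => hE3nonneg t
  -- assemble
  have hBlow : Cb * W 0 * (Real.exp (-T * σm) * T - (d + dμ)) ≤ B := by
    rw [hB, houter1, houter2, abs_neg,
      abs_of_nonneg hI3nonneg]
    have hle : T * (Real.exp (-T * σm) * (Cb * W 0))
        - (∫ t in (0:ℝ)..T,
            Real.exp (-t * σm) * Real.exp (-(T - t) * σp) * (Cb * W (2*t - 2*T)))
        ≤ |T * (Real.exp (-T * σm) * (Cb * W 0))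
        - ∫ t in (0:ℝ)..T,
            Real.exp (-t * σm) * Real.exp (-(T - t) * σp) * (Cb * W (2*t - 2*T))| :=
      le_abs_self _
    nlinarith [hI2, hI3]
  have hCW0 : 0 ≤ Cb * W 0 := by positivity
  have hexpm : Real.exp (-2 * CK * T) ≤ Real.exp (-T * σm) :=
    Real.exp_le_exp.mpr (by nlinarith)
  constructor
  · have h2 : Cφμ * (Real.exp (-2 * CK * T) * T - (dμ + d))
        ≤ Cb * W 0 * (Real.exp (-T * σm) * T - (d + dμ)) := by
      rw [hCφμ']
      apply mul_le_mul_of_nonneg_left ?_ hCW0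
      have := mul_le_mul_of_nonneg_right hexpm hT.le
      linarith
    linarith
  · intro h
    have h1 : d + dμ < Real.exp (-2 * CK * T) * T := (div_lt_iff₀ hT).mp h
    have h2 : 0 < Cφμ * (Real.exp (-2 * CK * T) * T - (dμ + d)) := by
      rw [hCφμ']
      have : 0 < Cb * W 0 := by positivity
      nlinarith
    calc (0:ℝ) < Cφμ * (Real.exp (-2 * CK * T) * T - (dμ + d)) := h2
      _ ≤ B := by
          have h3 : Cφμ * (Real.exp (-2 * CK * T) * T - (dμ + d))
              ≤ Cb * W 0 * (Real.exp (-T * σm) * T - (d + dμ)) := by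
            rw [hCφμ']
            apply mul_le_mul_of_nonneg_left ?_ hCW0
            have := mul_le_mul_of_nonneg_right hexpm hT.le
            linarith
          linarith
end
end
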